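/- arXiv:0905.1361 — 2 statements merged into one kernel-verified Lean document; each statement's English description precedes it below -/
import Mathlib

section
/- Let {X(t)} be a uniformly layered walk and fix n≥1. For y,z∈D_n let g(y,z) denote the expected number of visits to z, starting from y, strictly before the walk first exits D_n (this expectation is finite). Then for all z∈D_n, g(o,z) ≥ (1/#D_n)·Σ_{y∈D_n} g(y,z). -/
open MeasureTheory Filter
open scoped Classical ENNReal

abbrev Z2 : Type := ℤ × ℤ

def origin : Z2 := (0, 0)

def dnorm (x : Z2) : ℕ := x.1.natAbs + x.2.natAbs

def layer (k : ℕ) : Set Z2 := {x | dnorm x = k}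

def layerCard (k : ℕ) : ℕ := if k = 0 then 1 else 4 * k

def diamond (r : ℝ) : Set Z2 := {x | (dnorm x : ℝ) ≤ r}

noncomputable def diamondF (n : ℕ) : Finset Z2 :=
  (Finset.Icc (-(n : ℤ), -(n : ℤ)) ((n : ℤ), (n : ℤ))).filter fun x => dnorm x ≤ n

def vol (n : ℕ) : ℕ := 2 * n * (n + 1) + 1

/-- A uniformly layered walk kernel: a Markov transition kernel on `ℤ²`
satisfying conditions (U1), (U2), (U3). -/
structure IsULW (Q : Z2 → Z2 → ℝ) : Prop where
  nonneg : ∀ x y, 0 ≤ Q x y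
  rowSum : ∀ x, ∑' y, Q x y = 1
  u1 : ∀ x y, dnorm x + 1 < dnorm y → Q x y = 0
  u2 : ∀ x, ∃ y, dnorm y = dnorm x + 1 ∧ 0 < Q x y
  u3 : ∀ (k : ℕ) (y z : Z2), dnorm y = dnorm z →
    ∑' x : layer k, Q x.1 y = ∑' x : layer k, Q x.1 z

/-- `X` is a Markov chain with transition kernel `Q` started at `x0`:
all finite-dimensional distributions are specified. -/
def IsWalkFrom {Ω : Type} [MeasurableSpace Ω] (P : Measure Ω)
    (X : ℕ → Ω → Z2) (Q : Z2 → Z2 → ℝ) (x0 : Z2) : Prop :=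
  ∀ (t : ℕ) (path : ℕ → Z2),
    P {ω | ∀ s ≤ t, X s ω = path s} =
      ENNReal.ofReal ((if path 0 = x0 then (1 : ℝ) else 0) *
        ∏ s ∈ Finset.range t, Q (path s) (path (s + 1)))

/-- `X` is a Markov chain with transition kernel `Q` started from the uniform
distribution on layer `L_k`. -/
def IsWalkUniform {Ω : Type} [MeasurableSpace Ω] (P : Measure Ω)
    (X : ℕ → Ω → Z2) (Q : Z2 → Z2 → ℝ) (k : ℕ) : Prop :=
  ∀ (t : ℕ) (path : ℕ → Z2),
    P {ω | ∀ s ≤ t, X s ω = path s} =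
      ENNReal.ofReal ((if dnorm (path 0) = k then (1 : ℝ) / layerCard k else 0) *
        ∏ s ∈ Finset.range t, Q (path s) (path (s + 1)))

/-- The walks `Y 0, Y 1, …` are independent. -/
def IndepWalks {Ω : Type} [MeasurableSpace Ω] (P : Measure Ω)
    (Y : ℕ → ℕ → Ω → Z2) : Prop :=
  ∀ (I : Finset ℕ) (t : ℕ) (path : ℕ → ℕ → Z2),
    P {ω | ∀ i ∈ I, ∀ s ≤ t, Y i s ω = path i s} =
      ∏ i ∈ I, P {ω | ∀ s ≤ t, Y i s ω = path i s}

/-- Internal DLA clusters built from the walks `Y`: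
`gCluster Y k = A(k+1)`, the cluster of `k+1` occupied sites; the walk `Y i`
is the walk performed by the particle producing `A(i+1)` from `A(i)`,
and `Y 0 0` is the position of the very first particle. -/
noncomputable def gCluster {Ω : Type} (Y : ℕ → ℕ → Ω → Z2) : ℕ → Ω → Finset Z2
  | 0 => fun ω => {Y 0 0 ω}
  | k + 1 => fun ω =>
      insert (Y (k + 1) (sInf {t | Y (k + 1) t ω ∉ gCluster Y k ω}) ω)
        (gCluster Y k ω)

/-- The stopped process at level `n`: `stoppedC Y n k = S(k+1)`; particles also
stop upon reaching layer `L_n`. -/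
noncomputable def stoppedC {Ω : Type} (Y : ℕ → ℕ → Ω → Z2) (n : ℕ) : ℕ → Ω → Finset Z2
  | 0 => fun _ => {origin}
  | k + 1 => fun ω =>
      insert (Y (k + 1)
          (sInf {t | Y (k + 1) t ω ∈ layer n ∨ Y (k + 1) t ω ∉ stoppedC Y n k ω}) ω)
        (stoppedC Y n k ω)

/-- The extended process at level `n`: `extC Y n i = E(i)`, starting from the full
diamond `D_n` and driven by the walks `Y (vol n + i)`. -/
noncomputable def extC {Ω : Type} (Y : ℕ → ℕ → Ω → Z2) (n : ℕ) : ℕ → Ω → Finset Z2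
  | 0 => fun _ => diamondF n
  | k + 1 => fun ω =>
      insert (Y (vol n + k) (sInf {t | Y (vol n + k) t ω ∉ extC Y n k ω}) ω)
        (extC Y n k ω)

/-- The outward directed kernel `Q_out`. -/
noncomputable def Qout (x y : Z2) : ℝ :=
  if x = origin then (if dnorm y = 1 then 1 / 4 else 0)
  else if x.1 ≠ 0 ∧ x.2 ≠ 0 then
    if y = (x.1, x.2 + x.2.sign) then
      ((x.2.natAbs : ℝ) + 1 / 2) / ((x.1.natAbs : ℝ) + (x.2.natAbs : ℝ) + 1)
    else if y = (x.1 + x.1.sign, x.2) then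
      ((x.1.natAbs : ℝ) + 1 / 2) / ((x.1.natAbs : ℝ) + (x.2.natAbs : ℝ) + 1)
    else 0
  else if x.2 = 0 then
    if y = (x.1, 1) ∨ y = (x.1, -1) then (1 / 2) / ((x.1.natAbs : ℝ) + 1)
    else if y = (x.1 + x.1.sign, 0) then (x.1.natAbs : ℝ) / ((x.1.natAbs : ℝ) + 1)
    else 0
  else
    if y = (1, x.2) ∨ y = (-1, x.2) then (1 / 2) / ((x.2.natAbs : ℝ) + 1)
    else if y = (0, x.2 + x.2.sign) then (x.2.natAbs : ℝ) / ((x.2.natAbs : ℝ) + 1)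
    else 0

/-- The inward directed kernel `Q_in`. -/
noncomputable def Qin (x y : Z2) : ℝ :=
  if x = origin then (if y = origin then 1 else 0)
  else if x.1 ≠ 0 ∧ x.2 ≠ 0 then
    if y = (x.1, x.2 - x.2.sign) then
      ((x.2.natAbs : ℝ) - 1 / 2) / ((x.1.natAbs : ℝ) + (x.2.natAbs : ℝ) - 1)
    else if y = (x.1 - x.1.sign, x.2) then
      ((x.1.natAbs : ℝ) - 1 / 2) / ((x.1.natAbs : ℝ) + (x.2.natAbs : ℝ) - 1)
    else 0
  else if x.2 = 0 then
    if y = (x.1 - x.1.sign, 0) then 1 else 0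
  else
    if y = (0, x.2 - x.2.sign) then 1 else 0

/-- The interpolating kernel `Q_p = p Q_in + (1-p) Q_out`. -/
noncomputable def Qp (p : ℝ) (x y : Z2) : ℝ := p * Qin x y + (1 - p) * Qout x y

/-- First hitting time of the set `A`, valued in `ℕ∞` (`⊤` when `A` is never visited). -/
noncomputable def hitTimeE {Ω : Type} (X : ℕ → Ω → Z2) (A : Set Z2) (ω : Ω) : ℕ∞ :=
  sInf ((fun t : ℕ => (t : ℕ∞)) '' {t | X t ω ∈ A})
namespace ULW

noncomputable def qe (Q : Z2 → Z2 → ℝ) (x y : Z2) : ℝ≥0∞ := ENNReal.ofReal (Q x y)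

variable {Q : Z2 → Z2 → ℝ}

lemma qe_rowsum (hQ : IsULW Q) (x : Z2) : ∑' y, qe Q x y = 1 := by
  have hs : Summable (Q x) := by
    by_contra h
    have := tsum_eq_zero_of_not_summable h
    rw [hQ.rowSum x] at this; norm_num at this
  unfold qe
  rw [← ENNReal.ofReal_tsum_of_nonneg (fun y => hQ.nonneg x y) hs, hQ.rowSum x,
    ENNReal.ofReal_one]

lemma dnorm_origin : dnorm origin = 0 := rfl

lemma eq_origin_of_dnorm_eq_zero {x : Z2} (h : dnorm x = 0) : x = origin := by
  unfold dnorm at h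
  have h1 : x.1 = 0 := by omega
  have h2 : x.2 = 0 := by omega
  exact Prod.ext h1 h2

lemma mem_diamondF {m : ℕ} {x : Z2} : x ∈ diamondF m ↔ dnorm x ≤ m := by
  unfold diamondF
  rw [Finset.mem_filter]
  constructor
  · exact fun h => h.2
  · intro h
    refine ⟨?_, h⟩
    rw [Finset.mem_Icc]
    unfold dnorm at h
    constructor
    · exact Prod.mk_le_mk.2 ⟨by omega, by omega⟩
    · exact Prod.mk_le_mk.2 ⟨by omega, by omega⟩

/-- the layer `k` as a Finset -/
noncomputable def LF (k : ℕ) : Finset Z2 := (diamondF k).filter fun x => dnorm x = k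

lemma mem_LF {k : ℕ} {x : Z2} : x ∈ LF k ↔ dnorm x = k := by
  unfold LF
  rw [Finset.mem_filter, mem_diamondF]
  constructor
  · exact fun h => h.2
  · exact fun h => ⟨le_of_eq h, h⟩

lemma layer_eq_LF (k : ℕ) : layer k = (LF k : Set Z2) := by
  ext x; simp [layer, mem_LF]

/-- representative point of layer `j` -/
def rep (j : ℕ) : Z2 := ((j : ℤ), 0)

lemma dnorm_rep (j : ℕ) : dnorm (rep j) = j := by
  simp [rep, dnorm]

/-- U3 transferred to Finset sums of `qe`. -/
lemma u3_finset (hQ : IsULW Q) (k : ℕ) {y z : Z2} (h : dnorm y = dnorm z) :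
    ∑ x ∈ LF k, qe Q x y = ∑ x ∈ LF k, qe Q x z := by
  have hu := hQ.u3 k y z h
  rw [layer_eq_LF] at hu
  rw [Finset.tsum_subtype' (LF k) (fun x => Q x y),
      Finset.tsum_subtype' (LF k) (fun x => Q x z)] at hu
  unfold qe
  rw [← ENNReal.ofReal_sum_of_nonneg (fun i _ => hQ.nonneg i y),
      ← ENNReal.ofReal_sum_of_nonneg (fun i _ => hQ.nonneg i z), hu]

lemma origin_mem_diamondF (m : ℕ) : origin ∈ diamondF m := by
  rw [mem_diamondF]; simp [dnorm, origin]

lemma qe_eq_zero (hQ : IsULW Q) {x y : Z2} (h : dnorm x + 1 < dnorm y) : qe Q x y = 0 := by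
  simp [qe, hQ.u1 x y h]

lemma diamondF_filter_split (k : ℕ) (hk : 1 ≤ k) :
    (diamondF k).filter (fun x => ¬ dnorm x = k) = diamondF (k-1) := by
  ext x
  rw [Finset.mem_filter, mem_diamondF, mem_diamondF]
  omega

/-! ### Reversed-path lists -/

def hd (l : List Z2) : Z2 := l.headD origin
def lst (l : List Z2) : Z2 := l.getLastD origin

noncomputable def rwt (Q : Z2 → Z2 → ℝ) : List Z2 → ℝ≥0∞
  | [] => 1
  | [_] => 1
  | y :: x :: l => qe Q x y * rwt Q (x :: l)

lemma rwt_cons_cons (y x : Z2) (l : List Z2) :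
    rwt Q (y :: x :: l) = qe Q x y * rwt Q (x :: l) := rfl

lemma rwt_cons (y : Z2) {l : List Z2} (hl : l ≠ []) :
    rwt Q (y :: l) = qe Q (hd l) y * rwt Q l := by
  cases l with
  | nil => simp at hl
  | cons a m => rfl

lemma hd_cons (y : Z2) (l : List Z2) : hd (y :: l) = y := rfl

lemma lst_cons (y : Z2) {l : List Z2} (hl : l ≠ []) : lst (y :: l) = lst l := by
  unfold lst
  cases l with
  | nil => simp at hl
  | cons a m => simp [List.getLastD]

lemma lst_mem {l : List Z2} (hl : l ≠ []) : lst l ∈ l := by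
  induction l with
  | nil => simp at hl
  | cons a m ih =>
    cases m with
    | nil => simp [lst, List.getLastD]
    | cons b m' =>
      rw [lst_cons a (by simp)]
      exact List.mem_cons_of_mem a (ih (by simp))

lemma hd_mem {l : List Z2} (hl : l ≠ []) : hd l ∈ l := by
  cases l with
  | nil => simp at hl
  | cons a m => simp [hd]

noncomputable def pathsF (Q : Z2 → Z2 → ℝ) (A : Finset Z2) (x : Z2) : ℕ → Finset (List Z2)
  | 0 => if x ∈ A then {[x]} else ∅
  | s + 1 => (pathsF Q A x s).biUnion fun l => A.image fun y => y :: l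

lemma mem_pathsF {A : Finset Z2} {x : Z2} {s : ℕ} {l : List Z2} :
    l ∈ pathsF Q A x s ↔ l.length = s + 1 ∧ lst l = x ∧ ∀ a ∈ l, a ∈ A := by
  induction s generalizing l with
  | zero =>
    unfold pathsF
    by_cases hx : x ∈ A
    · rw [if_pos hx]
      simp only [Finset.mem_singleton]
      constructor
      · rintro rfl
        exact ⟨rfl, rfl, by simpa using hx⟩
      · rintro ⟨hlen, hlst, hmem⟩
        match l, hlen with
        | [a], _ => simp [lst, List.getLastD] at hlst; rw [hlst]
    · rw [if_neg hx]
      simp only [Finset.notMem_empty, false_iff]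
      rintro ⟨hlen, hlst, hmem⟩
      match l, hlen with
      | [a], _ =>
        apply hx
        have : lst [a] = a := rfl
        rw [this] at hlst
        subst hlst
        exact hmem _ (by simp)
  | succ s ih =>
    unfold pathsF
    rw [Finset.mem_biUnion]
    constructor
    · rintro ⟨m, hm, hl⟩
      rw [Finset.mem_image] at hl
      obtain ⟨y, hy, rfl⟩ := hl
      obtain ⟨hlen, hlst, hmem⟩ := ih.1 hm
      have hmne : m ≠ [] := by intro h; rw [h] at hlen; simp at hlen
      refine ⟨by simp [hlen], by rw [lst_cons y hmne]; exact hlst, ?_⟩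
      intro a ha
      rcases List.mem_cons.1 ha with rfl | ha
      · exact hy
      · exact hmem a ha
    · rintro ⟨hlen, hlst, hmem⟩
      match l, hlen with
      | y :: m, hlen =>
        have hmne : m ≠ [] := by
          intro h; rw [h] at hlen; simp at hlen
        refine ⟨m, ih.2 ⟨by simpa using hlen, by rw [lst_cons y hmne] at hlst; exact hlst,
          fun a ha => hmem a (List.mem_cons_of_mem y ha)⟩, ?_⟩
        rw [Finset.mem_image]
        exact ⟨y, hmem y (by simp), rfl⟩

lemma pathsF_ne_nil {A : Finset Z2} {x : Z2} {s : ℕ} {l : List Z2}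
    (h : l ∈ pathsF Q A x s) : l ≠ [] := by
  intro hn
  obtain ⟨hlen, -, -⟩ := mem_pathsF.1 h
  rw [hn] at hlen; simp at hlen

lemma pathsF_mono {A B : Finset Z2} (hAB : A ⊆ B) {x : Z2} {s : ℕ} :
    pathsF Q A x s ⊆ pathsF Q B x s := by
  intro l hl
  obtain ⟨h1, h2, h3⟩ := mem_pathsF.1 hl
  exact mem_pathsF.2 ⟨h1, h2, fun a ha => hAB (h3 a ha)⟩

lemma pathsF_zero_mem {A : Finset Z2} {x : Z2} (hx : x ∈ A) :
    pathsF Q A x 0 = {[x]} := by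
  unfold pathsF; rw [if_pos hx]

lemma hd_mem_of_pathsF {A : Finset Z2} {x : Z2} {s : ℕ} {l : List Z2}
    (h : l ∈ pathsF Q A x s) : hd l ∈ A := by
  obtain ⟨-, -, h3⟩ := mem_pathsF.1 h
  exact h3 _ (hd_mem (pathsF_ne_nil h))

/-- weight of concatenation. -/
lemma rwt_append {u v : List Z2} (hu : u ≠ []) (hv : v ≠ []) :
    rwt Q (u ++ v) = rwt Q u * qe Q (hd v) (lst u) * rwt Q v := by
  induction u with
  | nil => simp at hu
  | cons a m ih =>
    cases m with
    | nil =>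
      have : lst [a] = a := rfl
      rw [this]
      have : rwt Q [a] = 1 := rfl
      rw [this, one_mul]
      show rwt Q (a :: v) = qe Q (hd v) a * rwt Q v
      exact rwt_cons a hv
    | cons b m' =>
      have hne : (b :: m') ++ v ≠ [] := by simp
      calc rwt Q ((a :: b :: m') ++ v) = qe Q b a * rwt Q ((b :: m') ++ v) := rfl
        _ = qe Q b a * (rwt Q (b :: m') * qe Q (hd v) (lst (b :: m')) * rwt Q v) := by
            rw [ih (by simp)]
        _ = rwt Q (a :: b :: m') * qe Q (hd v) (lst (a :: b :: m')) * rwt Q v := by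
            rw [rwt_cons_cons, lst_cons a (by simp)]
            ring

/-! ### Survival sums -/

noncomputable def survA (Q : Z2 → Z2 → ℝ) (A : Finset Z2) (x : Z2) (s : ℕ) : ℝ≥0∞ :=
  ∑ l ∈ pathsF Q A x s, rwt Q l

lemma survA_zero {A : Finset Z2} {x : Z2} (hx : x ∈ A) : survA Q A x 0 = 1 := by
  unfold survA
  rw [pathsF_zero_mem hx]
  simp
  rfl

lemma sum_pathsF_succ {A : Finset Z2} {x : Z2} {s : ℕ} (f : List Z2 → ℝ≥0∞) :
    ∑ l ∈ pathsF Q A x (s+1), f l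
      = ∑ l ∈ pathsF Q A x s, ∑ y ∈ A, f (y :: l) := by
  show ∑ l ∈ (pathsF Q A x s).biUnion (fun l => A.image fun y => y :: l), f l = _
  rw [Finset.sum_biUnion]
  · refine Finset.sum_congr rfl fun l _ => ?_
    rw [Finset.sum_image]
    intro a _ b _ h
    exact (List.cons_eq_cons.mp h).1
  · intro l1 h1 l2 h2 hne
    simp only [Finset.disjoint_left, Finset.mem_image]
    rintro a ⟨y1, -, rfl⟩ ⟨y2, -, heq⟩
    exact hne (List.cons_eq_cons.mp heq).2.symm

lemma survA_succ {A : Finset Z2} {x : Z2} {s : ℕ} :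
    survA Q A x (s+1) = ∑ l ∈ pathsF Q A x s, rwt Q l * ∑ y ∈ A, qe Q (hd l) y := by
  unfold survA
  rw [sum_pathsF_succ]
  refine Finset.sum_congr rfl fun l hl => ?_
  rw [Finset.mul_sum]
  refine Finset.sum_congr rfl fun y _ => ?_
  rw [rwt_cons y (pathsF_ne_nil hl)]
  ring

lemma rowA_le_one (hQ : IsULW Q) (A : Finset Z2) (x : Z2) : ∑ y ∈ A, qe Q x y ≤ 1 := by
  rw [← qe_rowsum hQ x]
  exact ENNReal.sum_le_tsum A

lemma survA_succ_le (hQ : IsULW Q) {A : Finset Z2} {x : Z2} {s : ℕ} :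
    survA Q A x (s+1) ≤ survA Q A x s := by
  rw [survA_succ]
  unfold survA
  refine Finset.sum_le_sum fun l hl => ?_
  calc rwt Q l * ∑ y ∈ A, qe Q (hd l) y ≤ rwt Q l * 1 :=
        mul_le_mul_right (rowA_le_one hQ A (hd l)) _
    _ = rwt Q l := mul_one _

lemma survA_anti (hQ : IsULW Q) {A : Finset Z2} {x : Z2} :
    ∀ {s t : ℕ}, s ≤ t → survA Q A x t ≤ survA Q A x s := by
  intro s t h
  induction t with
  | zero => rw [Nat.le_zero.1 h]
  | succ t ih =>
    rcases Nat.lt_or_ge s (t+1) with h' | h'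
    · exact le_trans (survA_succ_le hQ) (ih (Nat.lt_succ_iff.1 h'))
    · rw [le_antisymm h h']

lemma survA_le_one (hQ : IsULW Q) {A : Finset Z2} {x : Z2} {s : ℕ} :
    survA Q A x s ≤ 1 := by
  induction s with
  | zero =>
    unfold survA
    unfold pathsF
    by_cases hx : x ∈ A
    · rw [if_pos hx]; simp; exact le_of_eq rfl
    · rw [if_neg hx]; simp
  | succ s ih => exact le_trans (survA_succ_le hQ) ih

/-- dropLast decomposition of `pathsF`. -/
lemma pathsF_succ_eq_biUnion_append {A : Finset Z2} {x : Z2} (hx : x ∈ A) (s : ℕ) :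
    pathsF Q A x (s+1) = A.biUnion fun y => (pathsF Q A y s).image fun u => u ++ [x] := by
  ext l
  rw [Finset.mem_biUnion, mem_pathsF]
  constructor
  · rintro ⟨hlen, hlst, hmem⟩
    have hne : l ≠ [] := by intro h; rw [h] at hlen; simp at hlen
    have hdrop : l.dropLast ++ [l.getLast hne] = l := List.dropLast_append_getLast hne
    have hlastx : l.getLast hne = x := by
      rw [← hlst]
      unfold lst
      rw [List.getLastD_eq_getLast?, List.getLast?_eq_getLast hne]
      rfl
    have hdlen : l.dropLast.length = s + 1 := by
      rw [List.length_dropLast, hlen]; rfl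
    have hdne : l.dropLast ≠ [] := by
      intro h; rw [h] at hdlen; simp at hdlen
    refine ⟨lst l.dropLast, ?_, ?_⟩
    · have : lst l.dropLast ∈ l.dropLast := lst_mem hdne
      exact hmem _ (List.dropLast_sublist l |>.mem this)
    · rw [Finset.mem_image]
      refine ⟨l.dropLast, mem_pathsF.2 ⟨hdlen, rfl, fun a ha =>
        hmem a (List.dropLast_sublist l |>.mem ha)⟩, ?_⟩
      rw [hlastx] at hdrop
      exact hdrop
  · rintro ⟨y, hy, hl⟩
    rw [Finset.mem_image] at hl
    obtain ⟨u, hu, rfl⟩ := hl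
    obtain ⟨hlen, hlst, hmem⟩ := mem_pathsF.1 hu
    have hune : u ≠ [] := by intro h; rw [h] at hlen; simp at hlen
    refine ⟨by simp [hlen], ?_, ?_⟩
    · unfold lst
      rw [List.getLastD_concat]
    · intro a ha
      rcases List.mem_append.1 ha with ha | ha
      · exact hmem a ha
      · rw [List.mem_singleton.1 ha]; exact hx

/-- first-step recursion for `survA`. -/
lemma survA_first_step (hQ : IsULW Q) {A : Finset Z2} {x : Z2} (hx : x ∈ A) (s : ℕ) :
    survA Q A x (s+1) = ∑ y ∈ A, qe Q x y * survA Q A y s := by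
  unfold survA
  rw [pathsF_succ_eq_biUnion_append hx s, Finset.sum_biUnion]
  · refine Finset.sum_congr rfl fun y hy => ?_
    rw [Finset.sum_image, Finset.mul_sum]
    · refine Finset.sum_congr rfl fun u hu => ?_
      have hune : u ≠ [] := pathsF_ne_nil hu
      rw [rwt_append hune (by simp : ([x] : List Z2) ≠ [])]
      have h1 : hd [x] = x := rfl
      have h2 : rwt Q [x] = 1 := rfl
      have h3 : lst u = y := (mem_pathsF.1 hu).2.1
      rw [h1, h2, h3]
      ring
    · intro a _ b _ h
      exact (List.append_left_injective [x]) h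
  · intro y1 h1 y2 h2 hne
    simp only [Finset.disjoint_left, Finset.mem_image]
    rintro a ⟨u1, hu1, rfl⟩ ⟨u2, hu2, heq⟩
    have := (List.append_left_injective [x]) heq
    apply hne
    rw [← (mem_pathsF.1 hu1).2.1, ← (mem_pathsF.1 hu2).2.1, this]

/-- concatenation identity. -/
lemma survA_add (hQ : IsULW Q) {A : Finset Z2} :
    ∀ (a b : ℕ) (x : Z2), x ∈ A →
      survA Q A x (b + a) = ∑ l ∈ pathsF Q A x b, rwt Q l * survA Q A (hd l) a := by
  intro a
  induction a with
  | zero =>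
    intro b x hx
    simp only [Nat.add_zero]
    rw [show survA Q A x b = ∑ l ∈ pathsF Q A x b, rwt Q l from rfl]
    refine Finset.sum_congr rfl fun l hl => ?_
    rw [survA_zero (hd_mem_of_pathsF hl), mul_one]
  | succ a ih =>
    intro b x hx
    have : b + (a + 1) = (b + 1) + a := by omega
    rw [this, ih (b+1) x hx, sum_pathsF_succ]
    refine Finset.sum_congr rfl fun l hl => ?_
    have hlne : l ≠ [] := pathsF_ne_nil hl
    rw [survA_first_step hQ (hd_mem_of_pathsF hl) a, Finset.mul_sum]
    refine Finset.sum_congr rfl fun y hy => ?_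
    rw [rwt_cons y hlne, hd_cons]
    ring

/-! ### Escape and geometric decay -/

lemma escape_list (hQ : IsULW Q) : ∀ (m : ℕ) (x : Z2), ∃ l : List Z2,
    l.length = m + 1 ∧ lst l = x ∧ 0 < rwt Q l ∧ dnorm (hd l) = dnorm x + m ∧
    ∀ a ∈ l, dnorm a ≤ dnorm x + m := by
  intro m
  induction m with
  | zero =>
    intro x
    exact ⟨[x], rfl, rfl, by rw [show rwt Q [x] = 1 from rfl]; norm_num,
      by simp [hd], by simp [hd]⟩
  | succ m ih =>
    intro x
    obtain ⟨l, hlen, hlst, hpos, hhd, hmem⟩ := ih x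
    obtain ⟨y, hy, hQy⟩ := hQ.u2 (hd l)
    have hlne : l ≠ [] := by intro h; rw [h] at hlen; simp at hlen
    refine ⟨y :: l, by simp [hlen], by rw [lst_cons y hlne]; exact hlst, ?_, ?_, ?_⟩
    · rw [rwt_cons y hlne]
      have h1 : (0:ℝ≥0∞) < qe Q (hd l) y := ENNReal.ofReal_pos.2 hQy
      exact ENNReal.mul_pos h1.ne' (ne_of_gt hpos)
    · rw [hd_cons, hy, hhd]; omega
    · intro a ha
      rcases List.mem_cons.1 ha with rfl | ha
      · rw [hy, hhd]; omega
      · exact le_trans (hmem a ha) (by omega)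

lemma survA_lt_one (hQ : IsULW Q) {j : ℕ} {x : Z2} (hx : x ∈ diamondF j) :
    survA Q (diamondF j) x (j+1) < 1 := by
  have hxd : dnorm x ≤ j := mem_diamondF.1 hx
  set m := j + 1 - dnorm x with hm
  obtain ⟨l, hlen, hlst, hpos, hhd, hmem⟩ := escape_list hQ m x
  have hxm : dnorm x + m = j + 1 := by omega
  have hl1 : l ∈ pathsF Q (diamondF (j+1)) x m := by
    refine mem_pathsF.2 ⟨hlen, hlst, fun a ha => mem_diamondF.2 ?_⟩
    rw [← hxm]; exact hmem a ha
  have hl2 : l ∉ pathsF Q (diamondF j) x m := by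
    intro h
    have := (mem_pathsF.1 h).2.2 (hd l) (hd_mem (pathsF_ne_nil hl1))
    rw [mem_diamondF] at this
    omega
  have key : survA Q (diamondF j) x m + rwt Q l ≤ 1 := by
    calc survA Q (diamondF j) x m + rwt Q l
        = ∑ u ∈ insert l (pathsF Q (diamondF j) x m), rwt Q u := by
          rw [Finset.sum_insert hl2]; rw [add_comm]; rfl
      _ ≤ ∑ u ∈ pathsF Q (diamondF (j+1)) x m, rwt Q u := by
          refine Finset.sum_le_sum_of_subset ?_
          intro u hu
          rcases Finset.mem_insert.1 hu with rfl | hu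
          · exact hl1
          · exact pathsF_mono (fun a ha => mem_diamondF.2 (le_trans (mem_diamondF.1 ha) (by omega))) hu
      _ = survA Q (diamondF (j+1)) x m := rfl
      _ ≤ 1 := survA_le_one hQ
  have hfin : survA Q (diamondF j) x m ≠ ⊤ :=
    ne_top_of_le_ne_top ENNReal.one_ne_top (survA_le_one hQ)
  calc survA Q (diamondF j) x (j+1) ≤ survA Q (diamondF j) x m :=
        survA_anti hQ (by omega)
    _ < survA Q (diamondF j) x m + rwt Q l := ENNReal.lt_add_right hfin (ne_of_gt hpos)
    _ ≤ 1 := key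

/-- geometric decay of survival sums along multiples. -/
lemma survA_pow (hQ : IsULW Q) {j : ℕ} {c : ℝ≥0∞}
    (hc : ∀ x ∈ diamondF j, survA Q (diamondF j) x (j+1) ≤ c) :
    ∀ (i : ℕ) (x : Z2), x ∈ diamondF j → survA Q (diamondF j) x ((j+1) * i) ≤ c ^ i := by
  intro i
  induction i with
  | zero => intro x hx; simpa using survA_le_one hQ
  | succ i ih =>
    intro x hx
    have : (j+1) * (i+1) = (j+1) + (j+1) * i := by ring
    rw [this, survA_add hQ ((j+1)*i) (j+1) x hx]
    calc ∑ l ∈ pathsF Q (diamondF j) x (j+1), rwt Q l * survA Q (diamondF j) (hd l) ((j+1)*i)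
        ≤ ∑ l ∈ pathsF Q (diamondF j) x (j+1), rwt Q l * c ^ i := by
          refine Finset.sum_le_sum fun l hl => ?_
          exact mul_le_mul_right (ih (hd l) (hd_mem_of_pathsF hl)) _
      _ = survA Q (diamondF j) x (j+1) * c ^ i := by
          rw [← Finset.sum_mul]; rfl
      _ ≤ c * c ^ i := mul_le_mul_left (hc x hx) _
      _ = c ^ (i+1) := by ring

/-- the uniform geometric bound. -/
lemma exists_decay (hQ : IsULW Q) (j : ℕ) :
    ∃ c : ℝ≥0∞, c < 1 ∧ ∀ (s : ℕ) (x : Z2), x ∈ diamondF j →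
      survA Q (diamondF j) x s ≤ c ^ (s / (j+1)) := by
  have hne : (diamondF j).Nonempty := ⟨origin, origin_mem_diamondF j⟩
  refine ⟨(diamondF j).sup' hne (fun x => survA Q (diamondF j) x (j+1)), ?_, ?_⟩
  · rw [Finset.sup'_lt_iff]
    exact fun x hx => survA_lt_one hQ hx
  · intro s x hx
    have h0 : (j+1) * (s / (j+1)) ≤ s := by
      rw [mul_comm]; exact Nat.div_mul_le_self s (j+1)
    have h1 : survA Q (diamondF j) x s ≤ survA Q (diamondF j) x ((j+1) * (s/(j+1))) :=
      survA_anti hQ h0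
    exact le_trans h1 (survA_pow hQ (fun x hx => Finset.le_sup' (fun x => survA Q (diamondF j) x (j+1)) hx) (s/(j+1)) x hx)

lemma tsum_survA_ne_top (hQ : IsULW Q) (j : ℕ) {x : Z2} (hx : x ∈ diamondF j) :
    ∑' s : ℕ, survA Q (diamondF j) x s ≠ ⊤ := by
  obtain ⟨c, hc1, hc2⟩ := exists_decay hQ j
  have hb : ∑' s : ℕ, survA Q (diamondF j) x s ≤ ∑' s : ℕ, c ^ (s / (j+1)) :=
    ENNReal.tsum_le_tsum fun s => hc2 s x hx
  refine ne_top_of_le_ne_top ?_ hb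
  rw [← Equiv.tsum_eq (Nat.divModEquiv (j+1)).symm (fun s => c ^ (s / (j+1)))]
  have heval : ∀ p : ℕ × Fin (j+1), c ^ ((((Nat.divModEquiv (j+1)).symm p) : ℕ) / (j+1)) = c ^ p.1 := by
    intro p
    congr 1
    show (p.1 * (j+1) + (p.2 : ℕ)) / (j+1) = p.1
    rw [mul_comm, Nat.mul_add_div (by omega)]
    simp [Nat.div_eq_of_lt p.2.isLt]
  rw [tsum_congr heval]
  have h2 : ∑' (b : ℕ × Fin (j+1)), c ^ b.1 = ∑' (q : ℕ), ∑' (_ : Fin (j+1)), c ^ q :=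
    ENNReal.tsum_prod' (f := fun (b : ℕ × Fin (j+1)) => c ^ b.1)
  rw [h2]
  have h3 : ∀ q : ℕ, ∑' (_ : Fin (j+1)), c ^ q = (j+1 : ℝ≥0∞) * c ^ q := by
    intro q
    rw [tsum_fintype]
    simp [Finset.sum_const, Finset.card_univ, nsmul_eq_mul]
  rw [tsum_congr h3, ENNReal.tsum_mul_left, ENNReal.tsum_geometric]
  exact ENNReal.mul_ne_top (by simp) (ENNReal.inv_ne_top.2 (by
    rw [ne_eq, tsub_eq_zero_iff_le]; exact not_le.2 hc1))

/-! ### Path functions and cylinder measures -/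

def pathFn (l : List Z2) : ℕ → Z2 := fun s => l.getD (l.length - 1 - s) origin

lemma lst_eq_getD (l : List Z2) : lst l = l.getD (l.length - 1) origin := by
  induction l with
  | nil => rfl
  | cons a m ih =>
    cases m with
    | nil => rfl
    | cons b m' =>
      rw [lst_cons a (by simp), ih]
      have : (a :: b :: m').length - 1 = (b :: m').length - 1 + 1 := by simp
      rw [this, List.getD_cons_succ]

lemma hd_eq_getD {l : List Z2} (hl : l ≠ []) : hd l = l.getD 0 origin := by
  cases l with
  | nil => simp at hl
  | cons a m => rfl

lemma pathFn_zero {l : List Z2} : pathFn l 0 = lst l := by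
  rw [lst_eq_getD]; rfl

lemma pathFn_cons_lt {a : Z2} {l : List Z2} {s : ℕ} (hl : l ≠ []) (hs : s ≤ l.length - 1) :
    pathFn (a :: l) s = pathFn l s := by
  unfold pathFn
  have h1 : (a :: l).length - 1 - s = (l.length - 1 - s) + 1 := by
    have : l.length ≠ 0 := fun h => hl (List.length_eq_zero_iff.1 h)
    simp only [List.length_cons]
    omega
  rw [h1, List.getD_cons_succ]

lemma pathFn_cons_top {a : Z2} {l : List Z2} :
    pathFn (a :: l) l.length = a := by
  unfold pathFn
  have : (a :: l).length - 1 - l.length = 0 := by simp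
  rw [this, List.getD_cons_zero]

lemma prod_pathFn_eq_rwt {l : List Z2} (hl : l ≠ []) :
    ∏ s ∈ Finset.range (l.length - 1), qe Q (pathFn l s) (pathFn l (s+1)) = rwt Q l := by
  induction l with
  | nil => simp at hl
  | cons a m ih =>
    cases m with
    | nil => simp; rfl
    | cons b m' =>
      set m := b :: m' with hm
      have hmne : m ≠ [] := by simp [hm]
      have hmlen : m.length - 1 + 1 = m.length := by
        have : m.length ≠ 0 := fun h => hmne (List.length_eq_zero_iff.1 h)
        omega
      have hlen : (a :: m).length - 1 = (m.length - 1) + 1 := by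
        simp only [List.length_cons]; omega
      rw [hlen, Finset.prod_range_succ]
      have hstep : ∀ s ∈ Finset.range (m.length - 1),
          qe Q (pathFn (a :: m) s) (pathFn (a :: m) (s+1)) = qe Q (pathFn m s) (pathFn m (s+1)) := by
        intro s hs
        rw [Finset.mem_range] at hs
        rw [pathFn_cons_lt hmne (by omega), pathFn_cons_lt hmne (by omega)]
      rw [Finset.prod_congr rfl hstep, ih hmne]
      have h1 : pathFn (a :: m) (m.length - 1 + 1) = a := by
        rw [hmlen]; exact pathFn_cons_top
      have h2 : pathFn (a :: m) (m.length - 1) = hd m := by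
        rw [pathFn_cons_lt hmne (le_refl _), hd_eq_getD hmne]
        unfold pathFn
        congr 1
        omega
      rw [h1, h2, rwt_cons a hmne]
      ring

variable {Ω : Type} [MeasurableSpace Ω] {P : Measure Ω} {X' : ℕ → Ω → Z2} {y : Z2}

lemma cyl_measure (hQ : IsULW Q) (hwalk : IsWalkFrom P X' Q y) {l : List Z2} {t : ℕ}
    (hlen : l.length = t + 1) :
    P {ω | ∀ s ≤ t, X' s ω = pathFn l s} = (if lst l = y then 1 else 0) * rwt Q l := by
  have hlne : l ≠ [] := by intro h; rw [h] at hlen; simp at hlen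
  rw [hwalk t (pathFn l)]
  have h0 : pathFn l 0 = lst l := pathFn_zero
  have hprod : ∏ s ∈ Finset.range t, Q (pathFn l s) (pathFn l (s+1))
      = ∏ s ∈ Finset.range (l.length - 1), Q (pathFn l s) (pathFn l (s+1)) := by
    have h : l.length - 1 = t := by omega
    rw [h]
  rw [ENNReal.ofReal_mul (by positivity), hprod]
  congr 1
  · rw [h0]; split <;> simp
  · rw [← prod_pathFn_eq_rwt hlne, ENNReal.ofReal_prod_of_nonneg]
    · rfl
    · intro i _
      exact hQ.nonneg _ _

/-- the reversed trajectory list. -/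
def trajL (X' : ℕ → Ω → Z2) (t : ℕ) (ω : Ω) : List Z2 :=
  List.ofFn (fun i : Fin (t+1) => X' (t - (i : ℕ)) ω)

lemma trajL_length (t : ℕ) (ω : Ω) : (trajL X' t ω).length = t + 1 := by
  simp [trajL]

lemma trajL_ne_nil (t : ℕ) (ω : Ω) : trajL X' t ω ≠ [] := by
  intro h
  have := trajL_length (X' := X') t ω
  rw [h] at this; simp at this

lemma trajL_pathFn {t s : ℕ} (hs : s ≤ t) (ω : Ω) :
    pathFn (trajL X' t ω) s = X' s ω := by
  unfold pathFn
  rw [trajL_length]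
  have hidx : t + 1 - 1 - s = t - s := by omega
  rw [hidx]
  have hlt : t - s < t + 1 := by omega
  rw [List.getD_eq_getElem _ _ (by rw [trajL_length]; exact hlt)]
  simp only [trajL, List.getElem_ofFn]
  congr 1
  omega

lemma trajL_lst (t : ℕ) (ω : Ω) : lst (trajL X' t ω) = X' 0 ω := by
  rw [← pathFn_zero, trajL_pathFn (Nat.zero_le t)]

lemma trajL_hd (t : ℕ) (ω : Ω) : hd (trajL X' t ω) = X' t ω := by
  rw [hd_eq_getD (trajL_ne_nil t ω)]
  have := trajL_pathFn (X' := X') (le_refl t) ω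
  unfold pathFn at this
  rw [trajL_length] at this
  simpa using this

lemma trajL_mem {t : ℕ} {ω : Ω} {a : Z2} (ha : a ∈ trajL X' t ω) :
    ∃ i ≤ t, a = X' i ω := by
  unfold trajL at ha
  rw [List.mem_ofFn] at ha
  obtain ⟨i, hi⟩ := ha
  exact ⟨t - (i : ℕ), by omega, hi.symm⟩

/-! ### Green's function upper bound -/

noncomputable def gsum (Q : Z2 → Z2 → ℝ) (A : Finset Z2) (y z : Z2) (t : ℕ) : ℝ≥0∞ :=
  ∑ l ∈ (pathsF Q A y t).filter (fun l => hd l = z), rwt Q l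

lemma green_upper (hQ : IsULW Q) (hwalk : IsWalkFrom P X' Q y) {n : ℕ}
    (hy : y ∈ diamondF n) (t : ℕ) (z : Z2) :
    P {ω | X' t ω = z ∧ ∀ s ≤ t, dnorm (X' s ω) ≤ n}
      ≤ gsum Q (diamondF n) y z t := by
  classical
  set V := diamondF n with hV
  set S : Finset (List Z2) :=
    V.biUnion (fun x => (pathsF Q V x t).filter (fun l => hd l = z)) with hS
  have hcov : {ω | X' t ω = z ∧ ∀ s ≤ t, dnorm (X' s ω) ≤ n}
      ⊆ ⋃ l ∈ S, {ω | ∀ s ≤ t, X' s ω = pathFn l s} := by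
    intro ω hω
    obtain ⟨hz, hconf⟩ := hω
    have hmemS : trajL X' t ω ∈ S := by
      rw [hS, Finset.mem_biUnion]
      refine ⟨X' 0 ω, mem_diamondF.2 (hconf 0 (Nat.zero_le t)), ?_⟩
      rw [Finset.mem_filter]
      refine ⟨mem_pathsF.2 ⟨trajL_length t ω, trajL_lst t ω, ?_⟩, ?_⟩
      · intro a ha
        obtain ⟨i, hi, rfl⟩ := trajL_mem ha
        exact mem_diamondF.2 (hconf i hi)
      · rw [trajL_hd, hz]
    refine Set.mem_biUnion hmemS ?_
    intro s hs
    exact (trajL_pathFn hs ω).symm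
  calc P {ω | X' t ω = z ∧ ∀ s ≤ t, dnorm (X' s ω) ≤ n}
      ≤ P (⋃ l ∈ S, {ω | ∀ s ≤ t, X' s ω = pathFn l s}) := measure_mono hcov
    _ ≤ ∑ l ∈ S, P {ω | ∀ s ≤ t, X' s ω = pathFn l s} := measure_biUnion_finset_le S _
    _ = ∑ l ∈ S, (if lst l = y then 1 else 0) * rwt Q l := by
        refine Finset.sum_congr rfl fun l hl => ?_
        rw [hS, Finset.mem_biUnion] at hl
        obtain ⟨x, hx, hl⟩ := hl
        exact cyl_measure hQ hwalk (mem_pathsF.1 (Finset.mem_filter.1 hl).1).1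
    _ = gsum Q V y z t := by
        rw [hS, Finset.sum_biUnion]
        · rw [Finset.sum_eq_single_of_mem y hy]
          · unfold gsum
            refine Finset.sum_congr rfl fun l hl => ?_
            rw [if_pos (mem_pathsF.1 (Finset.mem_filter.1 hl).1).2.1, one_mul]
          · intro x hx hxy
            refine Finset.sum_eq_zero fun l hl => ?_
            rw [if_neg, zero_mul]
            rw [(mem_pathsF.1 (Finset.mem_filter.1 hl).1).2.1]
            exact hxy
        · intro x1 h1 x2 h2 hne
          simp only [Finset.disjoint_left]
          intro l hl1 hl2
          apply hne
          rw [← (mem_pathsF.1 (Finset.mem_filter.1 hl1).1).2.1,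
              ← (mem_pathsF.1 (Finset.mem_filter.1 hl2).1).2.1]

/-! ### Escape mass and telescoping -/

noncomputable def escQ (Q : Z2 → Z2 → ℝ) (A : Finset Z2) (x : Z2) : ℝ≥0∞ :=
  ∑' y' : ((A : Set Z2)ᶜ : Set Z2), qe Q x y'

lemma sum_escQ (hQ : IsULW Q) (A : Finset Z2) (x : Z2) :
    (∑ v ∈ A, qe Q x v) + escQ Q A x = 1 := by
  have h1 : ∑ v ∈ A, qe Q x v = ∑' v : (A : Set Z2), qe Q x v :=
    (Finset.tsum_subtype' A (fun v => qe Q x v)).symm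
  rw [h1]
  unfold escQ
  rw [Summable.tsum_add_tsum_compl (f := fun v => qe Q x v) ENNReal.summable ENNReal.summable]
  exact qe_rowsum hQ x

noncomputable def escAt (Q : Z2 → Z2 → ℝ) (A : Finset Z2) (y : Z2) (s : ℕ) : ℝ≥0∞ :=
  ∑ l ∈ pathsF Q A y s, rwt Q l * escQ Q A (hd l)

lemma survA_split (hQ : IsULW Q) (A : Finset Z2) (y : Z2) (s : ℕ) :
    survA Q A y s = escAt Q A y s + survA Q A y (s+1) := by
  rw [survA_succ]
  unfold escAt
  rw [← Finset.sum_add_distrib]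
  show ∑ l ∈ pathsF Q A y s, rwt Q l = _
  refine Finset.sum_congr rfl fun l hl => ?_
  rw [← mul_add, add_comm (escQ Q A (hd l)), sum_escQ hQ A (hd l), mul_one]

lemma telescope (hQ : IsULW Q) (A : Finset Z2) (y : Z2) (t : ℕ) :
    (∑ s ∈ Finset.range t, escAt Q A y s) + survA Q A y t = survA Q A y 0 := by
  induction t with
  | zero => simp
  | succ t ih =>
    rw [Finset.sum_range_succ, add_assoc, ← survA_split hQ A y t, ih]

lemma gsum_split (A : Finset Z2) (y z : Z2) (t : ℕ) :
    gsum Q A y z t + (∑ l ∈ (pathsF Q A y t).filter (fun l => ¬ hd l = z), rwt Q l)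
      = survA Q A y t := by
  exact Finset.sum_filter_add_sum_filter_not _ _ _

/-! ### Green's function lower bound -/

lemma green_lower (hQ : IsULW Q) [IsProbabilityMeasure P] (hwalk : IsWalkFrom P X' Q y)
    {n : ℕ} (hy : y ∈ diamondF n) (t : ℕ) (z : Z2) :
    gsum Q (diamondF n) y z t
      ≤ P {ω | X' t ω = z ∧ ∀ s ≤ t, dnorm (X' s ω) ≤ n} := by
  classical
  set V := diamondF n with hV
  set E := {ω | X' t ω = z ∧ ∀ s ≤ t, dnorm (X' s ω) ≤ n} with hE
  set Ua := ⋃ y' : ((V : Set Z2)ᶜ : Set Z2), {ω | ∀ s ≤ 0, X' s ω = (y' : Z2)} with hUa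
  set S' : Finset (List Z2) :=
    (Finset.range t).biUnion (fun s => V.biUnion (fun x => pathsF Q V x s)) with hS'
  set Ub := ⋃ l ∈ S', ⋃ y' : ((V : Set Z2)ᶜ : Set Z2),
    {ω | ∀ r ≤ l.length, X' r ω = pathFn ((y' : Z2) :: l) r} with hUb
  set S'' : Finset (List Z2) :=
    V.biUnion (fun x => (pathsF Q V x t).filter (fun l => ¬ hd l = z)) with hS''
  set Uc := ⋃ l ∈ S'', {ω | ∀ r ≤ t, X' r ω = pathFn l r} with hUc
  -- coverage of the complement
  have hcov : Eᶜ ⊆ Ua ∪ (Ub ∪ Uc) := by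
    intro ω hω
    rw [hE, Set.mem_compl_iff, Set.mem_setOf_eq] at hω
    by_cases hconf : ∀ s ≤ t, dnorm (X' s ω) ≤ n
    · -- confined but endpoint wrong
      have hz : ¬ X' t ω = z := fun h => hω ⟨h, hconf⟩
      right; right
      have hmem : trajL X' t ω ∈ S'' := by
        rw [hS'', Finset.mem_biUnion]
        refine ⟨X' 0 ω, mem_diamondF.2 (hconf 0 (Nat.zero_le t)), ?_⟩
        rw [Finset.mem_filter]
        refine ⟨mem_pathsF.2 ⟨trajL_length t ω, trajL_lst t ω, fun a ha => ?_⟩, ?_⟩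
        · obtain ⟨i, hi, rfl⟩ := trajL_mem ha
          exact mem_diamondF.2 (hconf i hi)
        · rw [trajL_hd]; exact hz
      exact Set.mem_biUnion hmem (fun s hs => (trajL_pathFn hs ω).symm)
    · -- escapes the diamond before time t
      push_neg at hconf
      obtain ⟨s₁, hs₁, hbad⟩ := hconf
      have hex : ∃ s, n < dnorm (X' s ω) := ⟨s₁, hbad⟩
      set s₀ := Nat.find hex with hs₀
      have hbad₀ : n < dnorm (X' s₀ ω) := Nat.find_spec hex
      have hmin : ∀ r < s₀, dnorm (X' r ω) ≤ n := fun r hr =>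
        le_of_not_gt (Nat.find_min hex hr)
      have hs₀t : s₀ ≤ t := le_trans (Nat.find_le hbad) hs₁
      match hs₀eq : s₀ with
      | 0 =>
        left
        refine Set.mem_iUnion.2 ⟨⟨X' 0 ω, ?_⟩, ?_⟩
        · simp only [Set.mem_compl_iff, Finset.coe_sort_coe, Finset.mem_coe]
          rw [hV, mem_diamondF]
          omega
        · intro s hs
          rw [Nat.le_zero.1 hs]
      | s' + 1 =>
        right; left
        have hs't : s' < t := by omega
        have hx0 : X' 0 ω ∈ V := mem_diamondF.2 (hmin 0 (by omega))
        have hl : trajL X' s' ω ∈ S' := by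
          rw [hS', Finset.mem_biUnion]
          refine ⟨s', Finset.mem_range.2 hs't, ?_⟩
          rw [Finset.mem_biUnion]
          refine ⟨X' 0 ω, hx0, mem_pathsF.2 ⟨trajL_length s' ω, trajL_lst s' ω, fun a ha => ?_⟩⟩
          obtain ⟨i, hi, rfl⟩ := trajL_mem ha
          exact mem_diamondF.2 (hmin i (by omega))
        refine Set.mem_biUnion hl ?_
        refine Set.mem_iUnion.2 ⟨⟨X' (s'+1) ω, ?_⟩, ?_⟩
        · simp only [Set.mem_compl_iff, Finset.coe_sort_coe, Finset.mem_coe]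
          rw [hV, mem_diamondF]
          omega
        · intro r hr
          rw [trajL_length] at hr
          rcases Nat.lt_or_ge r (s'+1) with h | h
          · rw [pathFn_cons_lt (trajL_ne_nil s' ω) (by rw [trajL_length]; omega),
              trajL_pathFn (by omega)]
          · have hreq : r = s' + 1 := by omega
            subst hreq
            have h2 : (trajL X' s' ω).length = s' + 1 := trajL_length s' ω
            have h3 := pathFn_cons_top (a := X' (s'+1) ω) (l := trajL X' s' ω)
            rw [h2] at h3
            exact h3.symm
  -- bound for Ua
  have hUa0 : P Ua = 0 := by
    refine le_antisymm ?_ zero_le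
    calc P Ua ≤ ∑' y' : ((V : Set Z2)ᶜ : Set Z2), P {ω | ∀ s ≤ 0, X' s ω = (y' : Z2)} :=
          measure_iUnion_le _
      _ = 0 := by
          rw [ENNReal.tsum_eq_zero]
          intro y'
          have := hwalk 0 (fun _ => (y' : Z2))
          rw [this]
          have hne : (y' : Z2) ≠ y := by
            intro h
            have := y'.2
            rw [h] at this
            simp only [Set.mem_compl_iff, Finset.coe_sort_coe, Finset.mem_coe] at this
            exact this hy
          rw [if_neg hne]
          simp
  -- bound for Ub
  have hUbB : P Ub ≤ ∑ s ∈ Finset.range t, escAt Q V y s := by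
    calc P Ub ≤ ∑ l ∈ S', P (⋃ y' : ((V : Set Z2)ᶜ : Set Z2),
          {ω | ∀ r ≤ l.length, X' r ω = pathFn ((y' : Z2) :: l) r}) :=
        measure_biUnion_finset_le S' _
      _ ≤ ∑ l ∈ S', ∑' y' : ((V : Set Z2)ᶜ : Set Z2),
            P {ω | ∀ r ≤ l.length, X' r ω = pathFn ((y' : Z2) :: l) r} :=
        Finset.sum_le_sum fun l _ => measure_iUnion_le _
      _ = ∑ l ∈ S', (if lst l = y then 1 else 0) * (rwt Q l * escQ Q V (hd l)) := by
          refine Finset.sum_congr rfl fun l hl => ?_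
          rw [hS', Finset.mem_biUnion] at hl
          obtain ⟨s, hs, hl⟩ := hl
          rw [Finset.mem_biUnion] at hl
          obtain ⟨x, hx, hl⟩ := hl
          have hlne : l ≠ [] := pathsF_ne_nil hl
          have hstep : ∀ y' : ((V : Set Z2)ᶜ : Set Z2),
              P {ω | ∀ r ≤ l.length, X' r ω = pathFn ((y' : Z2) :: l) r}
                = (if lst l = y then 1 else 0) * (rwt Q l * qe Q (hd l) (y' : Z2)) := by
            intro y'
            have hc := cyl_measure hQ hwalk (l := (y' : Z2) :: l) (t := l.length) (by simp)
            rw [hc, lst_cons _ hlne, rwt_cons _ hlne]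
            ring_nf
          rw [tsum_congr hstep, ENNReal.tsum_mul_left, ENNReal.tsum_mul_left]
          unfold escQ
          ring
      _ = ∑ s ∈ Finset.range t, escAt Q V y s := by
          rw [hS', Finset.sum_biUnion]
          · refine Finset.sum_congr rfl fun s hs => ?_
            rw [Finset.sum_biUnion]
            · rw [Finset.sum_eq_single_of_mem y hy]
              · unfold escAt
                refine Finset.sum_congr rfl fun l hl => ?_
                rw [if_pos (mem_pathsF.1 hl).2.1, one_mul]
              · intro x hx hxy
                refine Finset.sum_eq_zero fun l hl => ?_
                rw [if_neg, zero_mul]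
                rw [(mem_pathsF.1 hl).2.1]
                exact hxy
            · intro x1 h1 x2 h2 hne
              simp only [Finset.disjoint_left]
              intro l hl1 hl2
              exact hne ((mem_pathsF.1 hl1).2.1 ▸ (mem_pathsF.1 hl2).2.1 ▸ rfl)
          · intro s1 h1 s2 h2 hne
            simp only [Finset.disjoint_left, Finset.mem_biUnion]
            rintro l ⟨x1, -, hl1⟩ ⟨x2, -, hl2⟩
            apply hne
            have e1 := (mem_pathsF.1 hl1).1
            have e2 := (mem_pathsF.1 hl2).1
            omega
  -- bound for Uc
  have hUcB : P Uc ≤ ∑ l ∈ (pathsF Q V y t).filter (fun l => ¬ hd l = z), rwt Q l := by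
    calc P Uc ≤ ∑ l ∈ S'', P {ω | ∀ r ≤ t, X' r ω = pathFn l r} :=
        measure_biUnion_finset_le S'' _
      _ = ∑ l ∈ S'', (if lst l = y then 1 else 0) * rwt Q l := by
          refine Finset.sum_congr rfl fun l hl => ?_
          rw [hS'', Finset.mem_biUnion] at hl
          obtain ⟨x, hx, hl⟩ := hl
          exact cyl_measure hQ hwalk (mem_pathsF.1 (Finset.mem_filter.1 hl).1).1
      _ = ∑ l ∈ (pathsF Q V y t).filter (fun l => ¬ hd l = z), rwt Q l := by
          rw [hS'', Finset.sum_biUnion]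
          · rw [Finset.sum_eq_single_of_mem y hy]
            · refine Finset.sum_congr rfl fun l hl => ?_
              rw [if_pos (mem_pathsF.1 (Finset.mem_filter.1 hl).1).2.1, one_mul]
            · intro x hx hxy
              refine Finset.sum_eq_zero fun l hl => ?_
              rw [if_neg, zero_mul]
              rw [(mem_pathsF.1 (Finset.mem_filter.1 hl).1).2.1]
              exact hxy
          · intro x1 h1 x2 h2 hne
            simp only [Finset.disjoint_left]
            intro l hl1 hl2
            apply hne
            rw [← (mem_pathsF.1 (Finset.mem_filter.1 hl1).1).2.1,
                ← (mem_pathsF.1 (Finset.mem_filter.1 hl2).1).2.1]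
  -- assemble
  set c : ℝ≥0∞ := (∑ s ∈ Finset.range t, escAt Q V y s)
    + ∑ l ∈ (pathsF Q V y t).filter (fun l => ¬ hd l = z), rwt Q l with hc
  have hsum : gsum Q V y z t + c = 1 := by
    have hg := gsum_split (Q := Q) V y z t
    have h2 := telescope hQ V y t
    rw [survA_zero hy] at h2
    calc gsum Q V y z t + c
        = (∑ s ∈ Finset.range t, escAt Q V y s)
          + (gsum Q V y z t + ∑ l ∈ (pathsF Q V y t).filter (fun l => ¬ hd l = z), rwt Q l) := by
          rw [hc]; ring
      _ = (∑ s ∈ Finset.range t, escAt Q V y s) + survA Q V y t := by rw [hg]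
      _ = 1 := h2
  have h1 : (1 : ℝ≥0∞) ≤ P E + c := by
    have hP1 : P Set.univ = 1 := measure_univ
    calc (1 : ℝ≥0∞) = P (E ∪ Eᶜ) := by rw [Set.union_compl_self, hP1]
      _ ≤ P E + P Eᶜ := measure_union_le E Eᶜ
      _ ≤ P E + (P Ua + (P Ub + P Uc)) := by
          refine add_le_add_right ?_ (P E)
          calc P Eᶜ ≤ P (Ua ∪ (Ub ∪ Uc)) := measure_mono hcov
            _ ≤ P Ua + P (Ub ∪ Uc) := measure_union_le _ _
            _ ≤ P Ua + (P Ub + P Uc) := add_le_add_right (measure_union_le _ _) _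
      _ ≤ P E + c := by
          rw [hUa0, zero_add, hc]
          exact add_le_add_right (add_le_add hUbB hUcB) (P E)
  have hcfin : c ≠ ⊤ := by
    intro h
    rw [h, add_top] at hsum
    exact ENNReal.top_ne_one hsum
  have : gsum Q V y z t = 1 - c := ENNReal.eq_sub_of_add_eq hcfin hsum
  rw [this, tsub_le_iff_right]
  exact h1

/-! ### Layer uniformity via (U3) -/

lemma filter_dnorm_diamondF {j i : ℕ} (hij : i ≤ j) :
    (diamondF j).filter (fun x => dnorm x = i) = LF i := by
  ext x
  rw [Finset.mem_filter, mem_diamondF, mem_LF]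
  omega

noncomputable def cW (Q : Z2 → Z2 → ℝ) (A : Finset Z2) (r : ℕ) (x : Z2) : ℝ≥0∞ :=
  ∑ l ∈ (pathsF Q A origin r).filter (fun l => hd l = x), rwt Q l

lemma sum_hd_fiber (A : Finset Z2) (r : ℕ) (g : Z2 → ℝ≥0∞) :
    ∑ l ∈ pathsF Q A origin r, rwt Q l * g (hd l) = ∑ x ∈ A, cW Q A r x * g x := by
  rw [← Finset.sum_fiberwise_of_maps_to (g := hd) (t := A)
    (fun l hl => hd_mem_of_pathsF hl) (fun l => rwt Q l * g (hd l))]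
  refine Finset.sum_congr rfl fun x hx => ?_
  unfold cW
  rw [Finset.sum_mul]
  refine Finset.sum_congr rfl fun l hl => ?_
  rw [(Finset.mem_filter.1 hl).2]

lemma cW_succ_mem {A : Finset Z2} {x : Z2} (hx : x ∈ A) (r : ℕ) :
    cW Q A (r+1) x = ∑ x' ∈ A, cW Q A r x' * qe Q x' x := by
  have hfil : (pathsF Q A origin (r+1)).filter (fun l => hd l = x)
      = (pathsF Q A origin r).image (fun l => x :: l) := by
    ext m
    rw [Finset.mem_filter, Finset.mem_image]
    constructor
    · rintro ⟨hm, hhd⟩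
      obtain ⟨hlen, hlst, hmem⟩ := mem_pathsF.1 hm
      match m, hlen with
      | a :: l, hlen =>
        have hlne : l ≠ [] := by
          intro h; rw [h] at hlen; simp at hlen
        have ha : a = x := hhd
        refine ⟨l, mem_pathsF.2 ⟨by simpa using hlen, ?_, fun b hb => hmem b (List.mem_cons_of_mem a hb)⟩, by rw [ha]⟩
        rw [lst_cons a hlne] at hlst
        exact hlst
    · rintro ⟨l, hl, rfl⟩
      obtain ⟨hlen, hlst, hmem⟩ := mem_pathsF.1 hl
      have hlne : l ≠ [] := by intro h; rw [h] at hlen; simp at hlen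
      refine ⟨mem_pathsF.2 ⟨by simp [hlen], by rw [lst_cons x hlne]; exact hlst, ?_⟩, rfl⟩
      intro b hb
      rcases List.mem_cons.1 hb with rfl | hb
      · exact hx
      · exact hmem b hb
  rw [show cW Q A (r+1) x
        = ∑ l ∈ (pathsF Q A origin (r+1)).filter (fun l => hd l = x), rwt Q l from rfl,
    hfil, Finset.sum_image (fun a _ b _ h => (List.cons_eq_cons.mp h).2),
    ← sum_hd_fiber A r (fun w => qe Q w x)]
  refine Finset.sum_congr rfl fun l hl => ?_
  rw [rwt_cons x (pathsF_ne_nil hl)]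
  ring

lemma cW_succ_not_mem {A : Finset Z2} {x : Z2} (hx : x ∉ A) (r : ℕ) :
    cW Q A (r+1) x = 0 := by
  unfold cW
  refine Finset.sum_eq_zero fun l hl => ?_
  exfalso
  rw [Finset.mem_filter] at hl
  exact hx (hl.2 ▸ hd_mem_of_pathsF hl.1)

lemma cW_uniform (hQ : IsULW Q) (j : ℕ) :
    ∀ (r : ℕ) {x x' : Z2}, dnorm x = dnorm x' →
      cW Q (diamondF j) r x = cW Q (diamondF j) r x' := by
  intro r
  induction r with
  | zero =>
    intro x x' hxx
    by_cases hx : x = origin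
    · have hx' : x' = origin := by
        apply eq_origin_of_dnorm_eq_zero
        rw [← hxx, hx]; rfl
      rw [hx, hx']
    · have hx' : x' ≠ origin := by
        intro h
        apply hx
        apply eq_origin_of_dnorm_eq_zero
        rw [hxx, h]; rfl
      have hzero : ∀ v : Z2, v ≠ origin → cW Q (diamondF j) 0 v = 0 := by
        intro v hv
        unfold cW
        rw [pathsF_zero_mem (origin_mem_diamondF j)]
        refine Finset.sum_eq_zero fun l hl => ?_
        exfalso
        rw [Finset.mem_filter, Finset.mem_singleton] at hl
        apply hv
        rw [← hl.2, hl.1]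
        rfl
      rw [hzero x hx, hzero x' hx']
  | succ r ih =>
    intro x x' hxx
    by_cases hx : x ∈ diamondF j
    · have hx' : x' ∈ diamondF j := by
        rw [mem_diamondF] at hx ⊢
        omega
      rw [cW_succ_mem hx r, cW_succ_mem hx' r]
      have hpart : ∀ v : Z2, ∑ w ∈ diamondF j, cW Q (diamondF j) r w * qe Q w v
          = ∑ i ∈ Finset.range (j+1), ∑ w ∈ LF i, cW Q (diamondF j) r w * qe Q w v := by
        intro v
        rw [← Finset.sum_fiberwise_of_maps_to (g := dnorm) (t := Finset.range (j+1))
          (fun w hw => Finset.mem_range.2 (by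
            have := mem_diamondF.1 hw; omega))]
        refine Finset.sum_congr rfl fun i hi => ?_
        rw [filter_dnorm_diamondF (by rw [Finset.mem_range] at hi; omega)]
      rw [hpart x, hpart x']
      refine Finset.sum_congr rfl fun i hi => ?_
      have hcongr : ∀ v : Z2, ∑ w ∈ LF i, cW Q (diamondF j) r w * qe Q w v
          = cW Q (diamondF j) r (rep i) * ∑ w ∈ LF i, qe Q w v := by
        intro v
        rw [Finset.mul_sum]
        refine Finset.sum_congr rfl fun w hw => ?_
        have hww : cW Q (diamondF j) r w = cW Q (diamondF j) r (rep i) :=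
          ih (show dnorm w = dnorm (rep i) by rw [mem_LF.1 hw, dnorm_rep])
        rw [hww]
      rw [hcongr x, hcongr x', u3_finset hQ i hxx]
    · have hx' : x' ∉ diamondF j := by
        rw [mem_diamondF] at hx ⊢
        omega
      rw [cW_succ_not_mem hx r, cW_succ_not_mem hx' r]

noncomputable def hitW (Q : Z2 → Z2 → ℝ) (A : Finset Z2) (r : ℕ) (y : Z2) : ℝ≥0∞ :=
  ∑ l ∈ pathsF Q A origin r, rwt Q l * qe Q (hd l) y

lemma hitW_uniform (hQ : IsULW Q) (j r : ℕ) {y y' : Z2} (h : dnorm y = dnorm y') :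
    hitW Q (diamondF j) r y = hitW Q (diamondF j) r y' := by
  unfold hitW
  rw [sum_hd_fiber (diamondF j) r (fun w => qe Q w y),
      sum_hd_fiber (diamondF j) r (fun w => qe Q w y')]
  have hpart : ∀ v : Z2, ∑ w ∈ diamondF j, cW Q (diamondF j) r w * qe Q w v
      = ∑ i ∈ Finset.range (j+1), ∑ w ∈ LF i, cW Q (diamondF j) r w * qe Q w v := by
    intro v
    rw [← Finset.sum_fiberwise_of_maps_to (g := dnorm) (t := Finset.range (j+1))
      (fun w hw => Finset.mem_range.2 (by
        have := mem_diamondF.1 hw; omega))]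
    refine Finset.sum_congr rfl fun i hi => ?_
    rw [filter_dnorm_diamondF (by rw [Finset.mem_range] at hi; omega)]
  rw [hpart y, hpart y']
  refine Finset.sum_congr rfl fun i hi => ?_
  have hcongr : ∀ v : Z2, ∑ w ∈ LF i, cW Q (diamondF j) r w * qe Q w v
      = cW Q (diamondF j) r (rep i) * ∑ w ∈ LF i, qe Q w v := by
    intro v
    rw [Finset.mul_sum]
    refine Finset.sum_congr rfl fun w hw => ?_
    have hww : cW Q (diamondF j) r w = cW Q (diamondF j) r (rep i) :=
      cW_uniform hQ j r (show dnorm w = dnorm (rep i) by rw [mem_LF.1 hw, dnorm_rep])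
    rw [hww]
  rw [hcongr y, hcongr y', u3_finset hQ i h]

/-- one-step splitting over the target layer. -/
lemma row_split_layer (hQ : IsULW Q) {k : ℕ} (hk : 1 ≤ k) {x : Z2}
    (hx : x ∈ diamondF (k-1)) :
    (∑ y ∈ LF k, qe Q x y) + (∑ v ∈ diamondF (k-1), qe Q x v) = 1 := by
  have hxd : dnorm x ≤ k - 1 := mem_diamondF.1 hx
  have hvanish : ∀ v : Z2, v ∉ diamondF k → qe Q x v = 0 := by
    intro v hv
    rw [mem_diamondF] at hv
    exact qe_eq_zero hQ (by omega)
  have htot : ∑ v ∈ diamondF k, qe Q x v = 1 := by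
    rw [← tsum_eq_sum (L := SummationFilter.unconditional _) hvanish]
    exact qe_rowsum hQ x
  have e1 : (diamondF k).filter (fun v => dnorm v = k) = LF k := filter_dnorm_diamondF (le_refl k)
  have e2 : (diamondF k).filter (fun v => ¬ dnorm v = k) = diamondF (k-1) := diamondF_filter_split k hk
  rw [← htot, ← Finset.sum_filter_add_sum_filter_not (diamondF k) (fun v => dnorm v = k), e1, e2]

lemma hitW_total (hQ : IsULW Q) {k : ℕ} (hk : 1 ≤ k) (r : ℕ) :
    (∑ y ∈ LF k, hitW Q (diamondF (k-1)) r y) + survA Q (diamondF (k-1)) origin (r+1)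
      = survA Q (diamondF (k-1)) origin r := by
  set A := diamondF (k-1) with hA
  have h1 : ∑ y ∈ LF k, hitW Q A r y
      = ∑ l ∈ pathsF Q A origin r, rwt Q l * ∑ y ∈ LF k, qe Q (hd l) y := by
    unfold hitW
    rw [Finset.sum_comm]
    exact Finset.sum_congr rfl fun l _ => (Finset.mul_sum _ _ _).symm
  rw [h1, survA_succ, ← Finset.sum_add_distrib]
  show _ = ∑ l ∈ pathsF Q A origin r, rwt Q l
  refine Finset.sum_congr rfl fun l hl => ?_
  rw [← mul_add, row_split_layer hQ hk (hd_mem_of_pathsF hl), mul_one]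

/-! ### Total hitting mass equals one -/

noncomputable def hitM (Q : Z2 → Z2 → ℝ) (k : ℕ) (y : Z2) : ℝ≥0∞ :=
  ∑' r : ℕ, hitW Q (diamondF (k-1)) r y

lemma hitM_telescope (hQ : IsULW Q) {k : ℕ} (hk : 1 ≤ k) (T : ℕ) :
    (∑ r ∈ Finset.range T, ∑ y ∈ LF k, hitW Q (diamondF (k-1)) r y)
      + survA Q (diamondF (k-1)) origin T = 1 := by
  induction T with
  | zero =>
    simp only [Finset.range_zero, Finset.sum_empty, zero_add]
    exact survA_zero (origin_mem_diamondF (k-1))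
  | succ T ih =>
    calc (∑ r ∈ Finset.range (T+1), ∑ y ∈ LF k, hitW Q (diamondF (k-1)) r y)
          + survA Q (diamondF (k-1)) origin (T+1)
        = (∑ r ∈ Finset.range T, ∑ y ∈ LF k, hitW Q (diamondF (k-1)) r y)
          + ((∑ y ∈ LF k, hitW Q (diamondF (k-1)) T y)
            + survA Q (diamondF (k-1)) origin (T+1)) := by
          rw [Finset.sum_range_succ, add_assoc]
      _ = (∑ r ∈ Finset.range T, ∑ y ∈ LF k, hitW Q (diamondF (k-1)) r y)
          + survA Q (diamondF (k-1)) origin T := by rw [hitW_total hQ hk T]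
      _ = 1 := ih

lemma sum_hitM (hQ : IsULW Q) {k : ℕ} (hk : 1 ≤ k) :
    ∑ y ∈ LF k, hitM Q k y = 1 := by
  have hswap : ∑ y ∈ LF k, hitM Q k y
      = ∑' r : ℕ, ∑ y ∈ LF k, hitW Q (diamondF (k-1)) r y :=
    (Summable.tsum_finsetSum (fun i _ => ENNReal.summable)).symm
  rw [hswap]
  set a : ℕ → ℝ≥0∞ := fun r => ∑ y ∈ LF k, hitW Q (diamondF (k-1)) r y with ha
  have hpartial : ∀ T, ∑ r ∈ Finset.range T, a r + survA Q (diamondF (k-1)) origin T = 1 :=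
    hitM_telescope hQ hk
  refine le_antisymm ?_ ?_
  · rw [ENNReal.tsum_eq_iSup_sum]
    refine iSup_le fun s => ?_
    obtain ⟨T, hT⟩ : ∃ T, s ⊆ Finset.range T := ⟨(s.sup id) + 1, fun i hi =>
      Finset.mem_range.2 (Nat.lt_succ_of_le (Finset.le_sup (f := id) hi))⟩
    calc ∑ r ∈ s, a r ≤ ∑ r ∈ Finset.range T, a r := Finset.sum_le_sum_of_subset hT
      _ ≤ 1 := le_of_add_le_left (le_of_eq (hpartial T))
  · refine ENNReal.le_of_forall_pos_le_add fun ε hε _ => ?_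
    have htend : Filter.Tendsto (fun T => survA Q (diamondF (k-1)) origin T)
        Filter.atTop (nhds 0) :=
      ENNReal.tendsto_atTop_zero_of_tsum_ne_top
        (tsum_survA_ne_top hQ (k-1) (origin_mem_diamondF (k-1)))
    rw [ENNReal.tendsto_atTop_zero] at htend
    obtain ⟨T, hT⟩ := htend (ε : ℝ≥0∞) (by exact_mod_cast hε)
    calc (1 : ℝ≥0∞) = ∑ r ∈ Finset.range T, a r + survA Q (diamondF (k-1)) origin T :=
          (hpartial T).symm
      _ ≤ (∑' r, a r) + (ε : ℝ≥0∞) :=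
          add_le_add (ENNReal.sum_le_tsum (Finset.range T)) (hT T (le_refl T))
lemma hitM_uniform (hQ : IsULW Q) {k : ℕ} {y y' : Z2}
    (h : dnorm y = dnorm y') : hitM Q k y = hitM Q k y' := by
  unfold hitM
  exact tsum_congr fun r => hitW_uniform hQ (k-1) r h

lemma hitM_card (hQ : IsULW Q) {k : ℕ} (hk : 1 ≤ k) {y : Z2} (hy : y ∈ LF k) :
    ((LF k).card : ℝ≥0∞) * hitM Q k y = 1 := by
  have hconst : ∀ y' ∈ LF k, hitM Q k y' = hitM Q k y := fun y' hy' =>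
    hitM_uniform hQ (by rw [mem_LF.1 hy', mem_LF.1 hy])
  calc ((LF k).card : ℝ≥0∞) * hitM Q k y = ∑ _y' ∈ LF k, hitM Q k y := by
        rw [Finset.sum_const, nsmul_eq_mul]
    _ = ∑ y' ∈ LF k, hitM Q k y' := (Finset.sum_congr rfl hconst).symm
    _ = 1 := sum_hitM hQ hk

/-! ### Concatenation of paths -/

lemma hd_append {u v : List Z2} (hu : u ≠ []) : hd (u ++ v) = hd u := by
  cases u with
  | nil => simp at hu
  | cons a u' => rfl

lemma lst_append {u v : List Z2} (hv : v ≠ []) : lst (u ++ v) = lst v := by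
  induction u with
  | nil => rfl
  | cons a u' ih =>
    have hne : u' ++ v ≠ [] := fun h => hv (List.append_eq_nil_iff.mp h).2
    rw [List.cons_append, lst_cons a hne, ih]

lemma lst_getElem {l : List Z2} (hl : l ≠ []) (h : l.length - 1 < l.length) :
    lst l = l[l.length - 1] := by
  rw [lst_eq_getD, List.getD_eq_getElem _ _ h]

lemma split_unique {k : ℕ} (hk : 1 ≤ k) {l l' l2 l2' : List Z2}
    (he : l2 ++ l = l2' ++ l')
    (hl : ∀ a ∈ l, a ∈ diamondF (k-1)) (hl' : ∀ a ∈ l', a ∈ diamondF (k-1))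
    (hl2 : l2 ≠ []) (hl2' : l2' ≠ [])
    (hy : dnorm (lst l2) = k) (hy' : dnorm (lst l2') = k) :
    l2 = l2' ∧ l = l' := by
  have haux : ∀ {u v u' v' : List Z2}, u ++ v = u' ++ v' →
      (∀ a ∈ v', a ∈ diamondF (k-1)) → u ≠ [] → u' ≠ [] → dnorm (lst u) = k →
      u.length ≤ u'.length := by
    intro u v u' v' he hv' hu hu' hlst
    by_contra hlen
    push_neg at hlen
    have hupos : 0 < u.length := List.length_pos_iff.2 hu
    have hi1 : u.length - 1 < u.length := by omega
    have hi2 : u'.length ≤ u.length - 1 := by omega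
    have hlenA : (u ++ v).length = u.length + v.length := List.length_append
    have hlenB : (u' ++ v').length = u'.length + v'.length := List.length_append
    have hitot : u.length - 1 < (u ++ v).length := by omega
    have hitot' : u.length - 1 < (u' ++ v').length := by rw [← he]; omega
    have hi4 : u.length - 1 - u'.length < v'.length := by omega
    have e1 : (u ++ v)[u.length - 1]'hitot = u[u.length - 1]'hi1 :=
      List.getElem_append_left hi1
    have e2 : (u' ++ v')[u.length - 1]'hitot' = v'[u.length - 1 - u'.length]'hi4 :=
      List.getElem_append_right hi2
    have e3 : (u ++ v)[u.length - 1]'hitot = (u' ++ v')[u.length - 1]'hitot' :=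
      List.getElem_of_eq he _
    have hmem : lst u ∈ v' := by
      rw [lst_getElem hu hi1, ← e1, e3, e2]
      exact List.getElem_mem _
    have := mem_diamondF.1 (hv' _ hmem)
    omega
  have hlen : l2.length = l2'.length :=
    le_antisymm (haux he hl' hl2 hl2' hy) (haux he.symm hl hl2' hl2 hy')
  exact List.append_inj he hlen

lemma concat_mem {n k : ℕ} (hkn : k ≤ n) {y : Z2} {r m : ℕ} {l l2 : List Z2}
    (hl : l ∈ pathsF Q (diamondF (k-1)) origin r)
    (hl2 : l2 ∈ pathsF Q (diamondF n) y m) :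
    l2 ++ l ∈ pathsF Q (diamondF n) origin (r + m + 1) := by
  obtain ⟨hlen, hlst, hmem⟩ := mem_pathsF.1 hl
  obtain ⟨hlen2, hlst2, hmem2⟩ := mem_pathsF.1 hl2
  have hlne : l ≠ [] := pathsF_ne_nil hl
  refine mem_pathsF.2 ⟨?_, ?_, ?_⟩
  · rw [List.length_append, hlen, hlen2]; omega
  · rw [lst_append hlne, hlst]
  · intro a ha
    rcases List.mem_append.1 ha with ha | ha
    · exact hmem2 a ha
    · exact mem_diamondF.2 (le_trans (mem_diamondF.1 (hmem a ha)) (by omega))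

lemma sum_antidiag_le (hQ : IsULW Q) {n k : ℕ} (hk : 1 ≤ k) (hkn : k ≤ n) (z : Z2) (d : ℕ) :
    ∑ p ∈ Finset.HasAntidiagonal.antidiagonal d, ∑ y ∈ LF k,
        hitW Q (diamondF (k-1)) p.1 y * gsum Q (diamondF n) y z p.2
      ≤ gsum Q (diamondF n) origin z (d+1) := by
  classical
  set A := diamondF (k-1) with hA
  set V := diamondF n with hV
  set s : Finset ((ℕ × ℕ) × Z2) := (Finset.HasAntidiagonal.antidiagonal d) ×ˢ LF k with hs
  set inner : (ℕ × ℕ) × Z2 → Finset (List Z2 × List Z2) := fun a =>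
    (pathsF Q A origin a.1.1) ×ˢ ((pathsF Q V a.2 a.1.2).filter (fun l2 => hd l2 = z))
    with hinner
  have h2 : ∀ a ∈ s, hitW Q A a.1.1 a.2 * gsum Q V a.2 z a.1.2
      = ∑ b ∈ inner a, rwt Q b.1 * qe Q (hd b.1) a.2 * rwt Q b.2 := by
    intro a ha
    calc hitW Q A a.1.1 a.2 * gsum Q V a.2 z a.1.2
        = ∑ l ∈ pathsF Q A origin a.1.1,
            ∑ l2 ∈ (pathsF Q V a.2 a.1.2).filter (fun l2 => hd l2 = z),
              (rwt Q l * qe Q (hd l) a.2) * rwt Q l2 :=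
          Finset.sum_mul_sum _ _ _ _
      _ = ∑ b ∈ inner a, rwt Q b.1 * qe Q (hd b.1) a.2 * rwt Q b.2 :=
          (Finset.sum_product' (pathsF Q A origin a.1.1)
            ((pathsF Q V a.2 a.1.2).filter (fun l2 => hd l2 = z))
            (fun l l2 => rwt Q l * qe Q (hd l) a.2 * rwt Q l2)).symm
  have step1 : ∑ p ∈ Finset.HasAntidiagonal.antidiagonal d, ∑ y ∈ LF k,
      hitW Q A p.1 y * gsum Q V y z p.2
      = ∑ x ∈ s.sigma inner, rwt Q x.2.1 * qe Q (hd x.2.1) x.1.2 * rwt Q x.2.2 := by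
    calc ∑ p ∈ Finset.HasAntidiagonal.antidiagonal d, ∑ y ∈ LF k, hitW Q A p.1 y * gsum Q V y z p.2
        = ∑ a ∈ s, hitW Q A a.1.1 a.2 * gsum Q V a.2 z a.1.2 :=
          (Finset.sum_product' (Finset.HasAntidiagonal.antidiagonal d) (LF k)
            (fun p y => hitW Q A p.1 y * gsum Q V y z p.2)).symm
      _ = ∑ a ∈ s, ∑ b ∈ inner a, rwt Q b.1 * qe Q (hd b.1) a.2 * rwt Q b.2 :=
          Finset.sum_congr rfl h2
      _ = ∑ x ∈ s.sigma inner, rwt Q x.2.1 * qe Q (hd x.2.1) x.1.2 * rwt Q x.2.2 :=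
          Finset.sum_sigma' s inner (fun a b => rwt Q b.1 * qe Q (hd b.1) a.2 * rwt Q b.2)
  rw [step1]
  set φ : (Σ _ : (ℕ × ℕ) × Z2, List Z2 × List Z2) → List Z2 := fun x => x.2.2 ++ x.2.1
    with hφ
  have hunpack : ∀ x ∈ s.sigma inner,
      x.1.1.1 + x.1.1.2 = d ∧ dnorm x.1.2 = k ∧
      x.2.1 ∈ pathsF Q A origin x.1.1.1 ∧
      x.2.2 ∈ pathsF Q V x.1.2 x.1.1.2 ∧ hd x.2.2 = z := by
    intro x hx
    rw [Finset.mem_sigma] at hx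
    obtain ⟨hx1, hx2⟩ := hx
    rw [hs, Finset.mem_product, Finset.HasAntidiagonal.mem_antidiagonal] at hx1
    rw [hinner, Finset.mem_product, Finset.mem_filter] at hx2
    exact ⟨hx1.1, mem_LF.1 hx1.2, hx2.1, hx2.2.1, hx2.2.2⟩
  have hmemφ : ∀ x ∈ s.sigma inner,
      φ x ∈ (pathsF Q V origin (d+1)).filter (fun l => hd l = z) := by
    intro x hx
    obtain ⟨hsum, hyk, hxl, hxl2, hhd⟩ := hunpack x hx
    rw [Finset.mem_filter]
    constructor
    · have := concat_mem hkn hxl hxl2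
      rw [show x.1.1.1 + x.1.1.2 + 1 = d + 1 by omega] at this
      exact this
    · rw [hφ]
      show hd (x.2.2 ++ x.2.1) = z
      rw [hd_append (pathsF_ne_nil hxl2)]
      exact hhd
  have hval : ∀ x ∈ s.sigma inner,
      rwt Q x.2.1 * qe Q (hd x.2.1) x.1.2 * rwt Q x.2.2 = rwt Q (φ x) := by
    intro x hx
    obtain ⟨hsum, hyk, hxl, hxl2, hhd⟩ := hunpack x hx
    rw [hφ]
    show _ = rwt Q (x.2.2 ++ x.2.1)
    rw [rwt_append (pathsF_ne_nil hxl2) (pathsF_ne_nil hxl),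
      (mem_pathsF.1 hxl2).2.1]
    ring
  have hinj : ∀ x ∈ s.sigma inner, ∀ x' ∈ s.sigma inner, φ x = φ x' → x = x' := by
    rintro ⟨⟨⟨r, m⟩, y⟩, l, l2⟩ hx ⟨⟨⟨r', m'⟩, y'⟩, l', l2'⟩ hx' heq
    obtain ⟨hsum, hyk, hxl, hxl2, hhd⟩ := hunpack _ hx
    obtain ⟨hsum', hyk', hxl', hxl2', hhd'⟩ := hunpack _ hx'
    simp only at hsum hyk hxl hxl2 hhd hsum' hyk' hxl' hxl2' hhd'
    have heq2 : l2 ++ l = l2' ++ l' := heq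
    have hl2ne : l2 ≠ [] := pathsF_ne_nil hxl2
    have hl2ne' : l2' ≠ [] := pathsF_ne_nil hxl2'
    have hsplit := split_unique hk heq2 (mem_pathsF.1 hxl).2.2 (mem_pathsF.1 hxl').2.2
      hl2ne hl2ne' (by rw [(mem_pathsF.1 hxl2).2.1]; exact hyk)
      (by rw [(mem_pathsF.1 hxl2').2.1]; exact hyk')
    obtain ⟨h22, h11⟩ := hsplit
    have hyy : y = y' := by
      rw [← (mem_pathsF.1 hxl2).2.1, ← (mem_pathsF.1 hxl2').2.1, h22]
    have hrr : r = r' := by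
      have e1 := (mem_pathsF.1 hxl).1
      have e2 := (mem_pathsF.1 hxl').1
      rw [h11] at e1
      omega
    have hmm : m = m' := by
      have e1 := (mem_pathsF.1 hxl2).1
      have e2 := (mem_pathsF.1 hxl2').1
      rw [h22] at e1
      omega
    subst hyy; subst hrr; subst hmm
    simp [h11, h22]
  calc ∑ x ∈ s.sigma inner, rwt Q x.2.1 * qe Q (hd x.2.1) x.1.2 * rwt Q x.2.2
      = ∑ x ∈ s.sigma inner, rwt Q (φ x) := Finset.sum_congr rfl hval
    _ = ∑ l ∈ (s.sigma inner).image φ, rwt Q l := (Finset.sum_image hinj).symm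
    _ ≤ ∑ l ∈ (pathsF Q V origin (d+1)).filter (fun l => hd l = z), rwt Q l := by
        refine Finset.sum_le_sum_of_subset ?_
        intro l hl
        rw [Finset.mem_image] at hl
        obtain ⟨x, hx, rfl⟩ := hl
        exact hmemφ x hx
    _ = gsum Q V origin z (d+1) := rfl

lemma key_ineq (hQ : IsULW Q) {n k : ℕ} (hk : 1 ≤ k) (hkn : k ≤ n) (z : Z2) :
    ∑ y ∈ LF k, hitM Q k y * (∑' t : ℕ, gsum Q (diamondF n) y z t)
      ≤ ∑' t : ℕ, gsum Q (diamondF n) origin z t := by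
  classical
  set T : ℕ × ℕ → ℝ≥0∞ := fun p => ∑ y ∈ LF k,
    hitW Q (diamondF (k-1)) p.1 y * gsum Q (diamondF n) y z p.2 with hT
  have hprod : ∀ y, hitM Q k y * (∑' t : ℕ, gsum Q (diamondF n) y z t)
      = ∑' p : ℕ × ℕ, hitW Q (diamondF (k-1)) p.1 y * gsum Q (diamondF n) y z p.2 := by
    intro y
    calc hitM Q k y * (∑' t : ℕ, gsum Q (diamondF n) y z t)
        = ∑' r : ℕ, hitW Q (diamondF (k-1)) r y * (∑' t : ℕ, gsum Q (diamondF n) y z t) :=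
          ENNReal.tsum_mul_right.symm
      _ = ∑' (r : ℕ) (m : ℕ), hitW Q (diamondF (k-1)) r y * gsum Q (diamondF n) y z m :=
          tsum_congr fun r => ENNReal.tsum_mul_left.symm
      _ = ∑' p : ℕ × ℕ, hitW Q (diamondF (k-1)) p.1 y * gsum Q (diamondF n) y z p.2 :=
          (ENNReal.tsum_prod' (f := fun p : ℕ × ℕ =>
            hitW Q (diamondF (k-1)) p.1 y * gsum Q (diamondF n) y z p.2)).symm
  have hLHS : ∑ y ∈ LF k, hitM Q k y * (∑' t : ℕ, gsum Q (diamondF n) y z t)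
      = ∑' p : ℕ × ℕ, T p := by
    rw [Finset.sum_congr rfl (fun y _ => hprod y), ← Summable.tsum_finsetSum (fun i _ => ENNReal.summable)]
  have hregroup : ∑' p : ℕ × ℕ, T p = ∑' d : ℕ, ∑ p ∈ Finset.HasAntidiagonal.antidiagonal d, T p := by
    rw [← Equiv.tsum_eq (Finset.HasAntidiagonal.sigmaAntidiagonalEquivProd (A := ℕ)) T, ENNReal.tsum_sigma']
    exact tsum_congr fun d => Finset.tsum_subtype (Finset.HasAntidiagonal.antidiagonal d) T
  rw [hLHS, hregroup]
  calc ∑' d : ℕ, ∑ p ∈ Finset.HasAntidiagonal.antidiagonal d, T p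
      ≤ ∑' d : ℕ, gsum Q (diamondF n) origin z (d+1) :=
        ENNReal.tsum_le_tsum fun d => sum_antidiag_le hQ hk hkn z d
    _ ≤ ∑' t : ℕ, gsum Q (diamondF n) origin z t :=
        ENNReal.tsum_comp_le_tsum_of_injective
          (fun a b h => by simpa using h : Function.Injective fun d : ℕ => d + 1) _

/-! ### Final assembly -/

lemma LF_zero : LF 0 = {origin} := by
  ext x
  rw [mem_LF, Finset.mem_singleton]
  constructor
  · exact eq_origin_of_dnorm_eq_zero
  · rintro rfl; rfl

lemma gsum_le_survA {A : Finset Z2} {y z : Z2} {t : ℕ} :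
    gsum Q A y z t ≤ survA Q A y t :=
  Finset.sum_le_sum_of_subset (Finset.filter_subset _ _)

end ULW

/-- **Mean value property of the Green's function on the diamond.** For a uniformly
layered walk killed on exiting `D_n`, with Green's function
`g(y,z) = E_y[#{t ≥ 0 : X(t) = z, t < first exit time of D_n}]` (these expectations
are finite), one has `g(o,z) ≥ (1/#D_n) Σ_{y∈D_n} g(y,z)` for all `z ∈ D_n`. -/
theorem statement17
    {Ω : Type} [MeasurableSpace Ω] (P : Measure Ω) [IsProbabilityMeasure P]
    (Q : Z2 → Z2 → ℝ) (hQ : IsULW Q) (n : ℕ) (hn : 1 ≤ n)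
    (X : Z2 → ℕ → Ω → Z2) (hwalk : ∀ y, IsWalkFrom P (X y) Q y) :
    (∀ y ∈ diamondF n, ∀ z ∈ diamondF n,
        (∑' t : ℕ, P {ω | X y t ω = z ∧ ∀ s ≤ t, dnorm (X y s ω) ≤ n}) ≠ ⊤) ∧
    (∀ z ∈ diamondF n,
        (∑ y ∈ diamondF n, ∑' t : ℕ, P {ω | X y t ω = z ∧ ∀ s ≤ t, dnorm (X y s ω) ≤ n})
            / ((diamondF n).card : ℝ≥0∞)
          ≤ ∑' t : ℕ, P {ω | X origin t ω = z ∧ ∀ s ≤ t, dnorm (X origin s ω) ≤ n}) := by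
  classical
  have hgreen : ∀ y ∈ diamondF n, ∀ (z : Z2),
      (∑' t : ℕ, P {ω | X y t ω = z ∧ ∀ s ≤ t, dnorm (X y s ω) ≤ n})
        = ∑' t : ℕ, ULW.gsum Q (diamondF n) y z t := by
    intro y hy z
    exact tsum_congr fun t => le_antisymm (ULW.green_upper hQ (hwalk y) hy t z)
      (ULW.green_lower hQ (hwalk y) hy t z)
  have horigin : origin ∈ diamondF n := ULW.origin_mem_diamondF n
  have hGfin : ∀ y ∈ diamondF n, ∀ z : Z2,
      (∑' t : ℕ, ULW.gsum Q (diamondF n) y z t) ≠ ⊤ := by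
    intro y hy z
    refine ne_top_of_le_ne_top (ULW.tsum_survA_ne_top hQ n hy)
      (ENNReal.tsum_le_tsum fun t => ?_)
    exact ULW.gsum_le_survA
  constructor
  · intro y hy z hz
    rw [hgreen y hy z]
    exact hGfin y hy z
  · intro z hz
    rw [hgreen origin horigin z,
      Finset.sum_congr rfl (fun y hy => hgreen y hy z)]
    -- now a statement about gsum only
    have hkey : ∀ k ∈ Finset.range (n+1),
        ∑ y ∈ ULW.LF k, (∑' t : ℕ, ULW.gsum Q (diamondF n) y z t)
          ≤ ((ULW.LF k).card : ℝ≥0∞) * ∑' t : ℕ, ULW.gsum Q (diamondF n) origin z t := by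
      intro k hk
      rw [Finset.mem_range] at hk
      rcases Nat.eq_zero_or_pos k with rfl | hk1
      · rw [ULW.LF_zero, Finset.sum_singleton, Finset.card_singleton]
        rw [Nat.cast_one, one_mul]
      · have hkn : k ≤ n := by omega
        calc ∑ y ∈ ULW.LF k, (∑' t : ℕ, ULW.gsum Q (diamondF n) y z t)
            = ∑ y ∈ ULW.LF k, ((ULW.LF k).card : ℝ≥0∞)
                * (ULW.hitM Q k y * (∑' t : ℕ, ULW.gsum Q (diamondF n) y z t)) := by
              refine Finset.sum_congr rfl fun y hy => ?_
              rw [← mul_assoc, ULW.hitM_card hQ hk1 hy, one_mul]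
          _ = ((ULW.LF k).card : ℝ≥0∞) * ∑ y ∈ ULW.LF k,
                ULW.hitM Q k y * (∑' t : ℕ, ULW.gsum Q (diamondF n) y z t) := by
              rw [Finset.mul_sum]
          _ ≤ ((ULW.LF k).card : ℝ≥0∞) * ∑' t : ℕ, ULW.gsum Q (diamondF n) origin z t :=
              mul_le_mul_right (ULW.key_ineq hQ hk1 hkn z) _
    have hmaps : ∀ x ∈ diamondF n, dnorm x ∈ Finset.range (n+1) := fun x hx =>
      Finset.mem_range.2 (by have := ULW.mem_diamondF.1 hx; omega)
    have hdecomp : ∑ y ∈ diamondF n, (∑' t : ℕ, ULW.gsum Q (diamondF n) y z t)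
        = ∑ k ∈ Finset.range (n+1), ∑ y ∈ ULW.LF k,
            (∑' t : ℕ, ULW.gsum Q (diamondF n) y z t) := by
      rw [← Finset.sum_fiberwise_of_maps_to (g := dnorm) hmaps]
      refine Finset.sum_congr rfl fun k hk => ?_
      rw [ULW.filter_dnorm_diamondF (by rw [Finset.mem_range] at hk; omega)]
    have hcard : ∑ k ∈ Finset.range (n+1), ((ULW.LF k).card : ℝ≥0∞)
        = ((diamondF n).card : ℝ≥0∞) := by
      rw [Finset.card_eq_sum_card_fiberwise hmaps]
      rw [Nat.cast_sum]
      refine Finset.sum_congr rfl fun k hk => ?_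
      rw [ULW.filter_dnorm_diamondF (by rw [Finset.mem_range] at hk; omega)]
    have hcard0 : ((diamondF n).card : ℝ≥0∞) ≠ 0 := by
      simp only [ne_eq, Nat.cast_eq_zero, Finset.card_eq_zero]
      intro h
      rw [h] at horigin
      exact absurd horigin (Finset.notMem_empty origin)
    have hcardtop : ((diamondF n).card : ℝ≥0∞) ≠ ⊤ := ENNReal.natCast_ne_top _
    rw [ENNReal.div_le_iff_le_mul (Or.inl hcard0) (Or.inl hcardtop)]
    calc ∑ y ∈ diamondF n, (∑' t : ℕ, ULW.gsum Q (diamondF n) y z t)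
        = ∑ k ∈ Finset.range (n+1), ∑ y ∈ ULW.LF k,
            (∑' t : ℕ, ULW.gsum Q (diamondF n) y z t) := hdecomp
      _ ≤ ∑ k ∈ Finset.range (n+1), ((ULW.LF k).card : ℝ≥0∞)
            * ∑' t : ℕ, ULW.gsum Q (diamondF n) origin z t :=
          Finset.sum_le_sum hkey
      _ = (∑ k ∈ Finset.range (n+1), ((ULW.LF k).card : ℝ≥0∞))
            * ∑' t : ℕ, ULW.gsum Q (diamondF n) origin z t := by
          rw [Finset.sum_mul]
      _ = (∑' t : ℕ, ULW.gsum Q (diamondF n) origin z t) * ((diamondF n).card : ℝ≥0∞) := by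
          rw [hcard, mul_comm]
end

section
/- For any uniformly layered walk and any n, the stopped cluster is contained in the internal DLA cluster in distribution via a coupling: there exists a coupling of the processes (using the same walks and the abelian property) under which S(i) ⊆ A(i) for all 1 ≤ i ≤ v_n; in particular P( D_ρ ⊄ A(v_n) ) ≤ P( D_ρ ⊄ S(v_n) ) for every ρ ≥ 0. -/
open MeasureTheory Filter
open scoped Classical ENNReal

/-- **Lemma (the stopped cluster is dominated by the cluster).** For any uniformly
layered walk and any `n`, there is a coupling: a copy `A'` of the internal DLA
cluster process (equal to it in distribution as a process) with `S(i) ⊆ A'(i)`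
pointwise for all `1 ≤ i ≤ v_n`; in particular
`P(D_ρ ⊄ A(v_n)) ≤ P(D_ρ ⊄ S(v_n))` for every `ρ ≥ 0`.
(Recall `gCluster Y k = A(k+1)`, `stoppedC Y n k = S(k+1)`, `v_n = 2n(n+1)+1`.) -/
theorem statement19
    {Ω : Type} [MeasurableSpace Ω] (P : Measure Ω) [IsProbabilityMeasure P]
    (Q : Z2 → Z2 → ℝ) (hQ : IsULW Q) (n : ℕ)
    (Y : ℕ → ℕ → Ω → Z2)
    (hstart : ∀ i ω, Y i 0 ω = origin)
    (hwalk : ∀ i, IsWalkFrom P (Y i) Q origin)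
    (hindep : IndepWalks P Y) :
    (∃ A' : ℕ → Ω → Finset Z2,
      (∀ (k : ℕ) (F : ℕ → Finset Z2),
          P {ω | ∀ j ≤ k, A' j ω = F j} = P {ω | ∀ j ≤ k, gCluster Y j ω = F j}) ∧
      ∀ ω, ∀ i ≤ 2 * n * (n + 1), stoppedC Y n i ω ⊆ A' i ω) ∧
    ∀ ρ : ℝ, 0 ≤ ρ →
      P {ω | ¬ diamond ρ ⊆ (↑(gCluster Y (2 * n * (n + 1)) ω) : Set Z2)}
        ≤ P {ω | ¬ diamond ρ ⊆ (↑(stoppedC Y n (2 * n * (n + 1)) ω) : Set Z2)} := by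
  have key : ∀ ω i, stoppedC Y n i ω ⊆ gCluster Y i ω := by
    intro ω i
    induction i with
    | zero =>
      simp [stoppedC, gCluster, hstart]
    | succ k ih =>
      intro x hx
      simp only [stoppedC, Finset.mem_insert] at hx
      rcases hx with rfl | hx
      · set TS := sInf {t | Y (k+1) t ω ∈ layer n ∨ Y (k+1) t ω ∉ stoppedC Y n k ω}
          with hTS
        by_cases hA : Y (k+1) TS ω ∈ gCluster Y k ω
        · exact Finset.mem_insert_of_mem hA
        · have hne : {t | Y (k+1) t ω ∉ gCluster Y k ω}.Nonempty := ⟨TS, hA⟩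
          set TA := sInf {t | Y (k+1) t ω ∉ gCluster Y k ω} with hTA
          have hTAmem : Y (k+1) TA ω ∉ gCluster Y k ω := Nat.sInf_mem hne
          have h1 : TS ≤ TA := Nat.sInf_le (Or.inr fun h => hTAmem (ih h))
          have h2 : TA ≤ TS := Nat.sInf_le hA
          have hEq : TA = TS := le_antisymm h2 h1
          show Y (k+1) TS ω ∈ gCluster Y (k+1) ω
          rw [← hEq]
          exact Finset.mem_insert_self _ _
      · exact Finset.mem_insert_of_mem (ih hx)
  refine ⟨⟨gCluster Y, fun k F => rfl, fun ω i _ => key ω i⟩, ?_⟩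
  intro ρ _
  apply measure_mono
  intro ω h hS
  exact h (hS.trans (Finset.coe_subset.mpr (key ω _)))
end
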